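/- arXiv:2412.14395 — 9 statements merged into one kernel-verified Lean document; each statement's English description precedes it below -/
import Mathlib

section
/- There exists a constant θ > 0 such that B[u, u] ≥ θ ‖u‖² for all u ∈ V. -/
open MeasureTheory Set Filter

lemma ae_fst_prod' {p : ℝ → Prop} (h : ∀ᵐ x : ℝ, p x) :
    ∀ᵐ z : ℝ × ℝ ∂((volume : Measure ℝ).prod volume), p z.1 := by
  rw [ae_iff] at h ⊢
  obtain ⟨N, hsub, hNm, hN0⟩ := exists_measurable_superset_of_null h
  have hN : ((volume : Measure ℝ).prod volume) (N ×ˢ (univ : Set ℝ)) = 0 := by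
    rw [Measure.prod_prod, hN0, zero_mul]
  refine measure_mono_null (fun z hz => ?_) hN
  exact mem_prod.2 ⟨hsub hz, mem_univ _⟩

/-- There exists a constant `θ > 0` such that `B[u, u] ≥ θ ‖u‖²` for all `u ∈ V`. -/
theorem stmt_1 (L : ℝ) (hL : 0 < L) (γ : ℝ → ℝ)
    (hγe : ∀ z, γ (-z) = γ z) (hγpos : ∀ z, 0 < γ z)
    (hγi : Integrable γ) (hγ2 : MemLp γ 2 volume) :
    ∃ θ > (0 : ℝ), ∀ u : ℝ → ℝ,
      MemLp u 2 volume → (∀ᵐ x : ℝ, x ∉ Icc (-L) L → u x = 0) →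
      (1/2 : ℝ) * (∫ x : ℝ, ∫ y : ℝ, (u y - u x) * γ (x - y) * (u y - u x))
        ≥ θ * ∫ x : ℝ, (u x) ^ 2 := by
  have hγ0 : ∀ z, 0 ≤ γ z := fun z => (hγpos z).le
  set c : ℝ := ∫ t in Ici (4*L), γ t with hc
  have hcpos : 0 < c := by
    rw [hc, setIntegral_pos_iff_support_of_nonneg_ae
      (Eventually.of_forall hγ0) hγi.integrableOn]
    have hsupp : Function.support γ = univ := eq_univ_of_forall fun z => (hγpos z).ne'
    rw [hsupp, univ_inter, Real.volume_Ici]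
    simp
  refine ⟨c/2, by linarith, ?_⟩
  intro u hu hu0
  -- replace u by a strongly measurable representative v
  set v : ℝ → ℝ := hu.1.mk u with hv
  have hvm : StronglyMeasurable v := hu.1.stronglyMeasurable_mk
  have huv : u =ᵐ[volume] v := hu.1.ae_eq_mk
  have h2 : ∫ x : ℝ, (u x) ^ 2 = ∫ x : ℝ, (v x) ^ 2 :=
    integral_congr_ae (huv.mono fun x hx => by simp only [hx])
  have h1 : (∫ x : ℝ, ∫ y : ℝ, (u y - u x) * γ (x - y) * (u y - u x))
      = ∫ x : ℝ, ∫ y : ℝ, (v y - v x) * γ (x - y) * (v y - v x) := by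
    refine integral_congr_ae ?_
    filter_upwards [huv] with x hx
    exact integral_congr_ae (huv.mono fun y hy => by simp only [hx, hy])
  have hv2 : MemLp v 2 volume := hu.ae_eq huv
  have hv0 : ∀ᵐ x : ℝ, x ∉ Icc (-L) L → v x = 0 := by
    filter_upwards [hu0, huv] with x h hx hmem
    rw [← hx]; exact h hmem
  rw [h1, h2]
  have hre : ∀ x : ℝ, (∫ y : ℝ, (v y - v x) * γ (x - y) * (v y - v x))
      = ∫ y : ℝ, (v y - v x) ^ 2 * γ (x - y) :=
    fun x => integral_congr_ae (Eventually.of_forall fun y => by ring)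
  have hv_sq : Integrable (fun x => (v x) ^ 2) volume := hv2.integrable_sq
  -- the three integrands on the product space
  set A : ℝ × ℝ → ℝ := fun p => (v p.2) ^ 2 * γ (p.1 - p.2) with hA_def
  have hA : Integrable A ((volume : Measure ℝ).prod volume) := by
    simpa [hA_def] using hv_sq.convolution_integrand (ContinuousLinearMap.mul ℝ ℝ) hγi
  have hB : Integrable (fun p : ℝ × ℝ => (v p.1) ^ 2 * γ (p.1 - p.2))
      ((volume : Measure ℝ).prod volume) := by
    refine hA.swap.congr (Eventually.of_forall fun p => ?_)
    show (v p.1) ^ 2 * γ (p.2 - p.1) = _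
    rw [← neg_sub p.1 p.2, hγe]
  set f : ℝ × ℝ → ℝ := fun p => (v p.2 - v p.1) ^ 2 * γ (p.1 - p.2) with hf_def
  have hγm : AEStronglyMeasurable (fun p : ℝ × ℝ => γ (p.1 - p.2))
      ((volume : Measure ℝ).prod volume) :=
    hγi.aestronglyMeasurable.comp_quasiMeasurePreserving
      (quasiMeasurePreserving_sub_of_right_invariant volume volume)
  have hfm : AEStronglyMeasurable f ((volume : Measure ℝ).prod volume) := by
    have hd : StronglyMeasurable (fun p : ℝ × ℝ => (v p.2 - v p.1) ^ 2) :=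
      ((hvm.comp_measurable measurable_snd).sub (hvm.comp_measurable measurable_fst)).pow 2
    exact hd.aestronglyMeasurable.mul hγm
  have hf_int : Integrable f ((volume : Measure ℝ).prod volume) := by
    refine Integrable.mono' (((hB.const_mul 2).add (hA.const_mul 2))) hfm
      (Eventually.of_forall fun p => ?_)
    have h1 : (0:ℝ) ≤ (v p.2 - v p.1) ^ 2 * γ (p.1 - p.2) :=
      mul_nonneg (sq_nonneg _) (hγ0 _)
    rw [hf_def, Real.norm_eq_abs, abs_of_nonneg h1]
    simp only [Pi.add_apply, hA_def]
    nlinarith [mul_nonneg (hγ0 (p.1 - p.2)) (sq_nonneg (v p.1 + v p.2))]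
  have hiter : (∫ x : ℝ, ∫ y : ℝ, (v y - v x) ^ 2 * γ (x - y))
      = ∫ p, f p ∂((volume : Measure ℝ).prod volume) := (integral_prod f hf_int).symm
  set g : ℝ × ℝ → ℝ := (Ici (3*L) ×ˢ (univ : Set ℝ)).indicator A with hg_def
  have hg_int : Integrable g ((volume : Measure ℝ).prod volume) :=
    hA.indicator (measurableSet_Ici.prod MeasurableSet.univ)
  have hfg : g ≤ᵐ[(volume : Measure ℝ).prod volume] f := by
    filter_upwards [ae_fst_prod' hv0] with p hp
    by_cases hmem : p ∈ Ici (3*L) ×ˢ (univ : Set ℝ)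
    · have h1 : p.1 ∉ Icc (-L) L := by
        have h3 : 3*L ≤ p.1 := hmem.1
        intro hcc
        have := hcc.2
        linarith
      have hv1 : v p.1 = 0 := hp h1
      rw [hg_def, indicator_of_mem hmem]
      simp only [hf_def, hA_def, hv1, sub_zero]
      exact le_refl _
    · rw [hg_def, indicator_of_notMem hmem]
      exact mul_nonneg (sq_nonneg _) (hγ0 _)
  have hstep1 : (∫ p, g p ∂((volume : Measure ℝ).prod volume))
      ≤ ∫ p, f p ∂((volume : Measure ℝ).prod volume) :=
    integral_mono_ae hg_int hf_int hfg
  have hswap : (∫ p, g p ∂((volume : Measure ℝ).prod volume))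
      = ∫ y : ℝ, ∫ x : ℝ, g (x, y) := integral_prod_symm g hg_int
  have hF_int : Integrable (fun y : ℝ => ∫ x : ℝ, g (x, y)) volume :=
    hg_int.integral_prod_right
  have hinner : ∀ y : ℝ, (∫ x : ℝ, g (x, y))
      = (v y) ^ 2 * ∫ t in Ici (3*L - y), γ t := by
    intro y
    have hg1 : (fun x : ℝ => g (x, y))
        = (Ici (3*L)).indicator (fun x => (v y) ^ 2 * γ (x - y)) := by
      funext x
      by_cases hx : x ∈ Ici (3*L) <;>
        simp [hg_def, hA_def, Set.indicator_apply, Set.mem_prod, hx]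
    rw [hg1, integral_indicator measurableSet_Ici, integral_const_mul]
    congr 1
    rw [← integral_indicator measurableSet_Ici]
    have hind : ∀ x : ℝ, (Ici (3*L)).indicator (fun x => γ (x - y)) x
        = (Ici (3*L - y)).indicator γ (x - y) := by
      intro x
      simp only [Set.indicator_apply, Set.mem_Ici, sub_le_sub_iff_right]
    simp_rw [hind]
    rw [integral_sub_right_eq_self ((Ici (3*L - y)).indicator γ) y]
    rw [integral_indicator measurableSet_Ici]
  have hmono : (fun y : ℝ => c * (v y) ^ 2) ≤ᵐ[volume] fun y : ℝ => ∫ x : ℝ, g (x, y) := by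
    filter_upwards [hv0] with y hy
    rw [hinner y]
    by_cases hmem : y ∈ Icc (-L) L
    · have hsub : Ici (4*L) ⊆ Ici (3*L - y) := Ici_subset_Ici.2 (by linarith [hmem.1])
      have hle : c ≤ ∫ t in Ici (3*L - y), γ t :=
        setIntegral_mono_set hγi.integrableOn (Eventually.of_forall hγ0)
          (HasSubset.Subset.eventuallyLE hsub)
      nlinarith [sq_nonneg (v y)]
    · rw [hy hmem]; simp
  have hstep2 : (∫ y : ℝ, c * (v y) ^ 2) ≤ ∫ y : ℝ, ∫ x : ℝ, g (x, y) :=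
    integral_mono_ae (hv_sq.const_mul c) hF_int hmono
  have hcm : (∫ y : ℝ, c * (v y) ^ 2) = c * ∫ y : ℝ, (v y) ^ 2 := integral_const_mul c _
  have hfinal : c * (∫ x : ℝ, (v x) ^ 2)
      ≤ ∫ x : ℝ, ∫ y : ℝ, (v y - v x) ^ 2 * γ (x - y) := by
    rw [hiter]
    calc c * (∫ x : ℝ, (v x) ^ 2) = ∫ y : ℝ, c * (v y) ^ 2 := hcm.symm
      _ ≤ ∫ y : ℝ, ∫ x : ℝ, g (x, y) := hstep2
      _ = ∫ p, g p ∂((volume : Measure ℝ).prod volume) := hswap.symm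
      _ ≤ _ := hstep1
  have hrw : (∫ x : ℝ, ∫ y : ℝ, (v y - v x) * γ (x - y) * (v y - v x))
      = ∫ x : ℝ, ∫ y : ℝ, (v y - v x) ^ 2 * γ (x - y) :=
    integral_congr_ae (Eventually.of_forall hre)
  rw [ge_iff_le, hrw]
  linarith
end

section
/- For all u, φ ∈ V one has −∫_ℝ (Ku)(x) φ(x) dx = B[u, φ]; that is, −∫_ℝ (Ku)(x) φ(x) dx = (1/2) ∫_ℝ ∫_ℝ (u(y) − u(x)) γ(x − y) (φ(y) − φ(x)) dy dx. -/
open MeasureTheory Set Function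

section Aux

/-- Product of two L² functions is integrable (Cauchy–Schwarz via AM–GM). -/
lemma l2_mul_integrable {g h : ℝ → ℝ} (hg : MemLp g 2 (volume : Measure ℝ))
    (hh : MemLp h 2 (volume : Measure ℝ)) :
    Integrable (fun x => g x * h x) (volume : Measure ℝ) := by
  have hbound : Integrable (fun x => (g x ^ 2 + h x ^ 2) / 2) volume :=
    (hg.integrable_sq.add hh.integrable_sq).div_const 2
  refine hbound.mono' (hg.aestronglyMeasurable.mul hh.aestronglyMeasurable) ?_
  filter_upwards with x
  rw [Real.norm_eq_abs, abs_mul]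
  nlinarith [sq_nonneg (|g x| - |h x|), sq_abs (g x), sq_abs (h x), abs_nonneg (g x),
    abs_nonneg (h x)]

/-- If `f` is integrable, then `(x,y) ↦ f x * γ (x - y)` is integrable on the product. -/
lemma integrable_fst_ker {f γ : ℝ → ℝ} (hγe : ∀ z, γ (-z) = γ z)
    (hf : Integrable f (volume : Measure ℝ)) (hγi : Integrable γ (volume : Measure ℝ)) :
    Integrable (fun p : ℝ × ℝ => f p.1 * γ (p.1 - p.2))
      ((volume : Measure ℝ).prod volume) := by
  have hg : Integrable (fun q : ℝ × ℝ => f q.1 * γ q.2)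
      ((volume : Measure ℝ).prod volume) := hf.mul_prod hγi
  have hT : MeasurePreserving (fun z : ℝ × ℝ => (z.1, z.2 - z.1))
      ((volume : Measure ℝ).prod volume) ((volume : Measure ℝ).prod volume) :=
    measurePreserving_prod_sub volume volume
  have h2 : Integrable ((fun q : ℝ × ℝ => f q.1 * γ q.2) ∘ fun z : ℝ × ℝ => (z.1, z.2 - z.1))
      ((volume : Measure ℝ).prod volume) :=
    (hT.integrable_comp hg.aestronglyMeasurable).2 hg
  have heq : ((fun q : ℝ × ℝ => f q.1 * γ q.2) ∘ fun z : ℝ × ℝ => (z.1, z.2 - z.1))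
      = fun p : ℝ × ℝ => f p.1 * γ (p.1 - p.2) := by
    funext p
    simp only [comp_apply]
    rw [show p.2 - p.1 = -(p.1 - p.2) by ring, hγe]
  rwa [heq] at h2

/-- If `f` is integrable, then `(x,y) ↦ f y * γ (x - y)` is integrable on the product. -/
lemma integrable_snd_ker {f γ : ℝ → ℝ} (hγe : ∀ z, γ (-z) = γ z)
    (hf : Integrable f (volume : Measure ℝ)) (hγi : Integrable γ (volume : Measure ℝ)) :
    Integrable (fun p : ℝ × ℝ => f p.2 * γ (p.1 - p.2))
      ((volume : Measure ℝ).prod volume) := by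
  have h1 := integrable_fst_ker hγe hf hγi
  have hswap : MeasurePreserving (Prod.swap : ℝ × ℝ → ℝ × ℝ)
      ((volume : Measure ℝ).prod volume) ((volume : Measure ℝ).prod volume) :=
    Measure.measurePreserving_swap
  have h2 : Integrable ((fun p : ℝ × ℝ => f p.1 * γ (p.1 - p.2)) ∘ Prod.swap)
      ((volume : Measure ℝ).prod volume) :=
    (hswap.integrable_comp h1.aestronglyMeasurable).2 h1
  have heq : ((fun p : ℝ × ℝ => f p.1 * γ (p.1 - p.2)) ∘ Prod.swap)
      = fun p : ℝ × ℝ => f p.2 * γ (p.1 - p.2) := by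
    funext p
    simp only [comp_apply, Prod.fst_swap, Prod.snd_swap]
    rw [show p.2 - p.1 = -(p.1 - p.2) by ring, hγe]
  rwa [heq] at h2

/-- AM–GM product integrability: `(x,y) ↦ g x * h y * γ (x - y)` for `g, h ∈ L²`. -/
lemma integrable_mix_ker {g h γ : ℝ → ℝ} (hγm : Measurable γ) (hγe : ∀ z, γ (-z) = γ z)
    (hγ0 : ∀ z, 0 ≤ γ z) (hγi : Integrable γ (volume : Measure ℝ))
    (hg2 : MemLp g 2 (volume : Measure ℝ)) (hgm : Measurable g)
    (hh2 : MemLp h 2 (volume : Measure ℝ)) (hhm : Measurable h) :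
    Integrable (fun p : ℝ × ℝ => g p.1 * h p.2 * γ (p.1 - p.2))
      ((volume : Measure ℝ).prod volume) := by
  have hg2i : Integrable (fun x => g x ^ 2 / 2) volume := hg2.integrable_sq.div_const 2
  have hh2i : Integrable (fun x => h x ^ 2 / 2) volume := hh2.integrable_sq.div_const 2
  have b1 := integrable_fst_ker hγe hg2i hγi
  have b2 := integrable_snd_ker hγe hh2i hγi
  refine (b1.add b2).mono' ?_ ?_
  · exact (((hgm.comp measurable_fst).mul (hhm.comp measurable_snd)).mul
      (hγm.comp (measurable_fst.sub measurable_snd))).aestronglyMeasurable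
  · filter_upwards with p
    have hc : (0:ℝ) ≤ γ (p.1 - p.2) := hγ0 _
    rw [Real.norm_eq_abs, abs_mul, abs_of_nonneg hc]
    have key : |g p.1 * h p.2| ≤ (g p.1 ^ 2 + h p.2 ^ 2) / 2 := by
      rw [abs_mul]
      nlinarith [sq_nonneg (|g p.1| - |h p.2|), sq_abs (g p.1), sq_abs (h p.2),
        abs_nonneg (g p.1), abs_nonneg (h p.2)]
    calc |g p.1 * h p.2| * γ (p.1 - p.2)
        ≤ (g p.1 ^ 2 + h p.2 ^ 2) / 2 * γ (p.1 - p.2) := mul_le_mul_of_nonneg_right key hc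
      _ = g p.1 ^ 2 / 2 * γ (p.1 - p.2) + h p.2 ^ 2 / 2 * γ (p.1 - p.2) := by ring

/-- The main identity, for measurable representatives. -/
lemma main_meas (γ : ℝ → ℝ) (hγm : Measurable γ) (hγe : ∀ z, γ (-z) = γ z)
    (hγ0 : ∀ z, 0 ≤ γ z) (hγi : Integrable γ (volume : Measure ℝ))
    (u φ : ℝ → ℝ) (hum : Measurable u) (hφm : Measurable φ)
    (hu2 : MemLp u 2 (volume : Measure ℝ)) (hφ2 : MemLp φ 2 (volume : Measure ℝ)) :
    -(∫ x : ℝ, (∫ y : ℝ, (u y - u x) * γ (x - y)) * φ x)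
      = (1/2 : ℝ) * ∫ x : ℝ, ∫ y : ℝ, (u y - u x) * γ (x - y) * (φ y - φ x) := by
  have huφi : Integrable (fun x => u x * φ x) volume := l2_mul_integrable hu2 hφ2
  have hA : Integrable (fun p : ℝ × ℝ => u p.2 * φ p.1 * γ (p.1 - p.2))
      ((volume : Measure ℝ).prod volume) :=
    (integrable_mix_ker hγm hγe hγ0 hγi hφ2 hφm hu2 hum).congr
      (Filter.Eventually.of_forall fun p => by simp only [Pi.sub_apply]; ring)
  have hB : Integrable (fun p : ℝ × ℝ => u p.1 * φ p.1 * γ (p.1 - p.2))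
      ((volume : Measure ℝ).prod volume) := integrable_fst_ker hγe huφi hγi
  have hC : Integrable (fun p : ℝ × ℝ => u p.2 * φ p.2 * γ (p.1 - p.2))
      ((volume : Measure ℝ).prod volume) := integrable_snd_ker hγe huφi hγi
  have hD : Integrable (fun p : ℝ × ℝ => u p.1 * φ p.2 * γ (p.1 - p.2))
      ((volume : Measure ℝ).prod volume) :=
    integrable_mix_ker hγm hγe hγ0 hγi hu2 hum hφ2 hφm
  have hG : Integrable (fun p : ℝ × ℝ => (u p.2 - u p.1) * γ (p.1 - p.2) * φ p.1)
      ((volume : Measure ℝ).prod volume) :=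
    (hA.sub hB).congr (Filter.Eventually.of_forall fun p => by simp only [Pi.sub_apply]; ring)
  have hFy : Integrable (fun p : ℝ × ℝ => (u p.2 - u p.1) * γ (p.1 - p.2) * φ p.2)
      ((volume : Measure ℝ).prod volume) :=
    (hC.sub hD).congr (Filter.Eventually.of_forall fun p => by simp only [Pi.sub_apply]; ring)
  have hH : Integrable (fun p : ℝ × ℝ => (u p.2 - u p.1) * γ (p.1 - p.2) * (φ p.2 - φ p.1))
      ((volume : Measure ℝ).prod volume) :=
    (hFy.sub hG).congr (Filter.Eventually.of_forall fun p => by simp only [Pi.sub_apply]; ring)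
  -- LHS as a product integral
  have e1 : ∀ x : ℝ, (∫ y : ℝ, (u y - u x) * γ (x - y)) * φ x
      = ∫ y : ℝ, (u y - u x) * γ (x - y) * φ x := fun x =>
    (integral_mul_const (φ x) fun y => (u y - u x) * γ (x - y)).symm
  have L1 : (∫ x : ℝ, (∫ y : ℝ, (u y - u x) * γ (x - y)) * φ x)
      = ∫ p : ℝ × ℝ, (u p.2 - u p.1) * γ (p.1 - p.2) * φ p.1
          ∂((volume : Measure ℝ).prod volume) := by
    simp only [e1]
    exact integral_integral (f := fun x y => (u y - u x) * γ (x - y) * φ x) hG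
  -- RHS as a product integral
  have R1 : (∫ x : ℝ, ∫ y : ℝ, (u y - u x) * γ (x - y) * (φ y - φ x))
      = ∫ p : ℝ × ℝ, (u p.2 - u p.1) * γ (p.1 - p.2) * (φ p.2 - φ p.1)
          ∂((volume : Measure ℝ).prod volume) :=
    integral_integral (f := fun x y => (u y - u x) * γ (x - y) * (φ y - φ x)) hH
  -- swap symmetry
  have L2 : (∫ p : ℝ × ℝ, (u p.2 - u p.1) * γ (p.1 - p.2) * φ p.2
          ∂((volume : Measure ℝ).prod volume))
      = -∫ p : ℝ × ℝ, (u p.2 - u p.1) * γ (p.1 - p.2) * φ p.1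
          ∂((volume : Measure ℝ).prod volume) := by
    have hsw := integral_prod_swap (μ := (volume : Measure ℝ)) (ν := (volume : Measure ℝ))
      (fun p : ℝ × ℝ => (u p.2 - u p.1) * γ (p.1 - p.2) * φ p.2)
    rw [← hsw]
    have e2 : ∀ z : ℝ × ℝ,
        (u z.swap.2 - u z.swap.1) * γ (z.swap.1 - z.swap.2) * φ z.swap.2
          = -((u z.2 - u z.1) * γ (z.1 - z.2) * φ z.1) := by
      intro z
      simp only [Prod.fst_swap, Prod.snd_swap]
      rw [show z.2 - z.1 = -(z.1 - z.2) by ring, hγe]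
      ring
    simp only [e2]
    exact integral_neg _
  -- combine
  have split : (∫ p : ℝ × ℝ, (u p.2 - u p.1) * γ (p.1 - p.2) * (φ p.2 - φ p.1)
          ∂((volume : Measure ℝ).prod volume))
      = (∫ p : ℝ × ℝ, (u p.2 - u p.1) * γ (p.1 - p.2) * φ p.2
          ∂((volume : Measure ℝ).prod volume))
        - ∫ p : ℝ × ℝ, (u p.2 - u p.1) * γ (p.1 - p.2) * φ p.1
          ∂((volume : Measure ℝ).prod volume) := by
    rw [← integral_sub hFy hG]
    exact integral_congr_ae (Filter.Eventually.of_forall fun p => by simp only [Pi.sub_apply]; ring)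
  rw [L1, R1, split, L2]
  ring

end Aux

/-- For all `u, φ ∈ V` one has `−∫ (Ku) φ = B[u, φ]`. -/
theorem stmt_2 (L : ℝ) (hL : 0 < L) (γ : ℝ → ℝ)
    (hγm : Measurable γ) (hγe : ∀ z, γ (-z) = γ z) (hγ0 : ∀ z, 0 ≤ γ z)
    (hγi : Integrable γ) :
    ∀ u φ : ℝ → ℝ,
      MemLp u 2 volume → (∀ᵐ x : ℝ, x ∉ Icc (-L) L → u x = 0) →
      MemLp φ 2 volume → (∀ᵐ x : ℝ, x ∉ Icc (-L) L → φ x = 0) →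
      -(∫ x : ℝ, (∫ y : ℝ, (u y - u x) * γ (x - y)) * φ x)
        = (1/2 : ℝ) * ∫ x : ℝ, ∫ y : ℝ, (u y - u x) * γ (x - y) * (φ y - φ x) := by
  intro u φ hu huz hφ hφz
  -- pass to measurable representatives
  set u' := hu.aestronglyMeasurable.mk u with hu'def
  set φ' := hφ.aestronglyMeasurable.mk φ with hφ'def
  have hu'e : u =ᵐ[volume] u' := hu.aestronglyMeasurable.ae_eq_mk
  have hφ'e : φ =ᵐ[volume] φ' := hφ.aestronglyMeasurable.ae_eq_mk
  have hu'm : Measurable u' := hu.aestronglyMeasurable.stronglyMeasurable_mk.measurable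
  have hφ'm : Measurable φ' := hφ.aestronglyMeasurable.stronglyMeasurable_mk.measurable
  have hu'2 : MemLp u' 2 volume := hu.ae_eq hu'e
  have hφ'2 : MemLp φ' 2 volume := hφ.ae_eq hφ'e
  have hL1 : (∫ x : ℝ, (∫ y : ℝ, (u y - u x) * γ (x - y)) * φ x)
      = ∫ x : ℝ, (∫ y : ℝ, (u' y - u' x) * γ (x - y)) * φ' x := by
    apply integral_congr_ae
    filter_upwards [hu'e, hφ'e] with x hxu hxφ
    have hinner : (∫ y : ℝ, (u y - u x) * γ (x - y))
        = ∫ y : ℝ, (u' y - u' x) * γ (x - y) := by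
      apply integral_congr_ae
      filter_upwards [hu'e] with y hyu
      rw [hyu, hxu]
    rw [hinner, hxφ]
  have hR1 : (∫ x : ℝ, ∫ y : ℝ, (u y - u x) * γ (x - y) * (φ y - φ x))
      = ∫ x : ℝ, ∫ y : ℝ, (u' y - u' x) * γ (x - y) * (φ' y - φ' x) := by
    apply integral_congr_ae
    filter_upwards [hu'e, hφ'e] with x hxu hxφ
    apply integral_congr_ae
    filter_upwards [hu'e, hφ'e] with y hyu hyφ
    rw [hyu, hxu, hyφ, hxφ]
  rw [hL1, hR1]
  exact main_meas γ hγm hγe hγ0 hγi u' φ' hu'm hφ'm hu'2 hφ'2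
end

section
/- There exists a constant C > 0 such that for every u ∈ V the function Ku is square-integrable on ℝ and ‖Ku‖ ≤ C ‖u‖; that is, K is a bounded linear operator from V into L²(ℝ). -/
open MeasureTheory Set
open scoped ENNReal NNReal

private lemma sq_add_le_en (a b : ℝ≥0∞) :
    (a + b) ^ (2:ℝ) ≤ 4 * (a ^ (2:ℝ) + b ^ (2:ℝ)) := by
  have h1 : a + b ≤ 2 * max a b := by
    rcases le_total a b with h | h
    · calc a + b ≤ b + b := by gcongr
        _ = 2 * b := (two_mul b).symm
        _ ≤ 2 * max a b := by gcongr; exact le_max_right a b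
    · calc a + b ≤ a + a := by gcongr
        _ = 2 * a := (two_mul a).symm
        _ ≤ 2 * max a b := by gcongr; exact le_max_left a b
  have h2 : (2:ℝ≥0∞) ^ (2:ℝ) = 4 := by
    rw [show (2:ℝ) = ((2:ℕ):ℝ) by norm_num, ENNReal.rpow_natCast]; norm_num
  calc (a + b) ^ (2:ℝ) ≤ (2 * max a b) ^ (2:ℝ) :=
        ENNReal.rpow_le_rpow h1 (by norm_num)
    _ = 4 * (max a b) ^ (2:ℝ) := by
        rw [ENNReal.mul_rpow_of_nonneg _ _ (by norm_num : (0:ℝ) ≤ 2), h2]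
    _ ≤ 4 * (a ^ (2:ℝ) + b ^ (2:ℝ)) := by
        gcongr
        rcases le_total a b with h | h
        · rw [max_eq_right h]; exact le_add_self
        · rw [max_eq_left h]; exact le_self_add

/-- `K` is a bounded linear operator from `V` into `L²(ℝ)`. -/
theorem stmt_4 (L : ℝ) (hL : 0 < L) (γ : ℝ → ℝ)
    (hγm : Measurable γ) (hγe : ∀ z, γ (-z) = γ z) (hγ0 : ∀ z, 0 ≤ γ z)
    (hγi : Integrable γ) :
    ∃ C > (0 : ℝ), ∀ u : ℝ → ℝ,
      MemLp u 2 volume → (∀ᵐ x : ℝ, x ∉ Icc (-L) L → u x = 0) →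
      MemLp (fun x => ∫ y : ℝ, (u y - u x) * γ (x - y)) 2 volume ∧
      (eLpNorm (fun x => ∫ y : ℝ, (u y - u x) * γ (x - y)) 2 volume).toReal
        ≤ C * (eLpNorm u 2 volume).toReal := by
  classical
  set γe : ℝ → ℝ≥0∞ := fun z => ENNReal.ofReal (γ z) with hγe_def
  have hγem : Measurable γe := ENNReal.measurable_ofReal.comp hγm
  set A : ℝ≥0∞ := ∫⁻ z, γe z with hA_def
  have hA_lt : A < ⊤ := hγi.lintegral_lt_top
  have hA_ne : A ≠ ⊤ := hA_lt.ne
  -- translation invariance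
  have htrans_left : ∀ x : ℝ, ∫⁻ y, γe (x - y) = A := by
    intro x
    have h : MeasurePreserving (fun y : ℝ => x - y) volume volume :=
      (measurePreserving_add_left volume x).comp (Measure.measurePreserving_neg volume)
    simpa using h.lintegral_comp hγem
  have htrans_right : ∀ y : ℝ, ∫⁻ x, γe (x - y) = A := by
    intro y
    have h : MeasurePreserving (fun x : ℝ => x - y) volume volume :=
      measurePreserving_sub_right volume y
    simpa using h.lintegral_comp hγem
  have hγnorm : ∀ z : ℝ, (‖γ z‖₊ : ℝ≥0∞) = γe z := by
    intro z
    simp [hγe_def, ← Real.enorm_eq_ofReal (hγ0 z)]; rfl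
  have hk₁ : ∀ x : ℝ, Measurable fun y : ℝ => γe (x - y) :=
    fun x => hγem.comp (measurable_const.sub measurable_id)
  have hk₂ : ∀ y : ℝ, Measurable fun x : ℝ => γe (x - y) :=
    fun y => hγem.comp (measurable_id.sub_const _)
  refine ⟨3 * A.toReal + 1, by positivity, ?_⟩
  intro u hu _
  -- measurable representative
  set v : ℝ → ℝ := hu.1.mk u with hv_def
  have hvSM : StronglyMeasurable v := hu.1.stronglyMeasurable_mk
  have hvm : Measurable v := hvSM.measurable
  have huv : u =ᵐ[volume] v := hu.1.ae_eq_mk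
  set Fu : ℝ → ℝ := fun x => ∫ y : ℝ, (u y - u x) * γ (x - y) with hFu_def
  set Fv : ℝ → ℝ := fun x => ∫ y : ℝ, (v y - v x) * γ (x - y) with hFv_def
  have hFF : Fu =ᵐ[volume] Fv := by
    filter_upwards [huv] with x hx
    simp only [hFu_def, hFv_def, hx]
    exact integral_congr_ae (huv.mono fun y hy => by simp only [hy])
  -- strong measurability of Fv
  have hGm : StronglyMeasurable fun p : ℝ × ℝ => (v p.2 - v p.1) * γ (p.1 - p.2) :=
    (((hvm.comp measurable_snd).sub (hvm.comp measurable_fst)).mul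
      (hγm.comp (measurable_fst.sub measurable_snd))).stronglyMeasurable
  have hFvSM : StronglyMeasurable Fv := hGm.integral_prod_right'
  -- notation
  set N : ℝ → ℝ≥0∞ := fun x => (‖v x‖₊ : ℝ≥0∞) with hN_def
  have hNm : Measurable N := hvm.nnnorm.coe_nnreal_ennreal
  set S : ℝ≥0∞ := ∫⁻ x, N x ^ (2:ℝ) with hS_def
  have hS_eq : eLpNorm v 2 volume = S ^ (1/2:ℝ) := by
    rw [eLpNorm_eq_lintegral_rpow_enorm_toReal (by norm_num) (by norm_num)]
    norm_num [hS_def, hN_def]; rfl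
  have hS_ne : S ≠ ⊤ := by
    have h1 : eLpNorm v 2 volume < ⊤ := (hu.ae_eq huv).eLpNorm_lt_top
    rw [hS_eq] at h1
    intro hS
    rw [hS] at h1
    simp [ENNReal.top_rpow_of_pos (by norm_num : (0:ℝ) < 1/2)] at h1
  -- measurable kernel integrand
  have hDm : Measurable fun p : ℝ × ℝ => (‖v p.2 - v p.1‖₊ : ℝ≥0∞) :=
    ((hvm.comp measurable_snd).sub (hvm.comp measurable_fst)).nnnorm.coe_nnreal_ennreal
  have hKm : Measurable fun p : ℝ × ℝ => γe (p.1 - p.2) :=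
    hγem.comp (measurable_fst.sub measurable_snd)
  -- W
  set W : ℝ → ℝ≥0∞ := fun x => ∫⁻ y, (‖v y - v x‖₊ : ℝ≥0∞) ^ (2:ℝ) * γe (x - y) with hW_def
  have hWm : Measurable W :=
    Measurable.lintegral_prod_right ((hDm.pow_const _).mul hKm)
  -- Step 1 + 2: pointwise bound ‖Fv x‖² ≤ W x * A
  have hpt : ∀ x : ℝ, (‖Fv x‖₊ : ℝ≥0∞) ^ (2:ℝ) ≤ W x * A := by
    intro x
    have h1 : (‖Fv x‖₊ : ℝ≥0∞) ≤ ∫⁻ y, (‖v y - v x‖₊ : ℝ≥0∞) * γe (x - y) := by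
      refine le_trans (enorm_integral_le_lintegral_enorm _) (le_of_eq ?_)
      refine lintegral_congr fun y => ?_
      rw [enorm_eq_nnnorm, nnnorm_mul, ENNReal.coe_mul, hγnorm]
    have hCS : (∫⁻ y, (‖v y - v x‖₊ : ℝ≥0∞) * γe (x - y))
        ≤ (W x) ^ (1/2:ℝ) * A ^ (1/2:ℝ) := by
      have hconj : Real.HolderConjugate 2 2 := ⟨by norm_num, by norm_num, by norm_num⟩
      have hf : AEMeasurable (fun y : ℝ => (‖v y - v x‖₊ : ℝ≥0∞) * γe (x - y) ^ (1/2:ℝ)) volume := by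
        exact (((hvm.sub_const _).nnnorm.coe_nnreal_ennreal).mul
          ((hγem.comp (measurable_const.sub measurable_id)).pow_const _)).aemeasurable
      have hg : AEMeasurable (fun y : ℝ => γe (x - y) ^ (1/2:ℝ)) volume :=
        ((hγem.comp (measurable_const.sub measurable_id)).pow_const _).aemeasurable
      have := ENNReal.lintegral_mul_le_Lp_mul_Lq volume hconj hf hg
      have heq : ∀ y : ℝ, ((fun y => (‖v y - v x‖₊ : ℝ≥0∞) * γe (x - y) ^ (1/2:ℝ)) *
          (fun y => γe (x - y) ^ (1/2:ℝ))) y = (‖v y - v x‖₊ : ℝ≥0∞) * γe (x - y) := by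
        intro y
        simp only [Pi.mul_apply]
        rw [mul_assoc, ← ENNReal.rpow_add_of_nonneg _ _ (by norm_num) (by norm_num)]
        norm_num
      rw [lintegral_congr heq] at this
      refine this.trans (le_of_eq ?_)
      congr 1
      · congr 1
        refine lintegral_congr fun y => ?_
        rw [ENNReal.mul_rpow_of_nonneg _ _ (by norm_num : (0:ℝ) ≤ 2),
          ← ENNReal.rpow_mul]
        norm_num
      · congr 1
        rw [← htrans_left x]
        refine lintegral_congr fun y => ?_
        rw [← ENNReal.rpow_mul]
        norm_num
    calc (‖Fv x‖₊ : ℝ≥0∞) ^ (2:ℝ)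
        ≤ ((W x) ^ (1/2:ℝ) * A ^ (1/2:ℝ)) ^ (2:ℝ) :=
          ENNReal.rpow_le_rpow (h1.trans hCS) (by norm_num)
      _ = W x * A := by
          rw [ENNReal.mul_rpow_of_nonneg _ _ (by norm_num : (0:ℝ) ≤ 2),
            ← ENNReal.rpow_mul, ← ENNReal.rpow_mul]
          norm_num
  -- Step 4: W x ≤ 4 * ∫⁻ y, (N y ^ 2 + N x ^ 2) * γe (x - y)
  have hW_le : ∀ x : ℝ, W x ≤ 4 * ∫⁻ y, (N y ^ (2:ℝ) + N x ^ (2:ℝ)) * γe (x - y) := by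
    intro x
    have hm4 : Measurable fun y : ℝ => (N y ^ (2:ℝ) + N x ^ (2:ℝ)) * γe (x - y) :=
      ((hNm.pow_const _).add_const _).mul (hk₁ x)
    rw [← lintegral_const_mul 4 hm4]
    refine lintegral_mono fun y => ?_
    rw [← mul_assoc]
    refine mul_le_mul_left ?_ _
    calc (‖v y - v x‖₊ : ℝ≥0∞) ^ (2:ℝ) ≤ (N y + N x) ^ (2:ℝ) := by
          refine ENNReal.rpow_le_rpow ?_ (by norm_num)
          simp only [hN_def, ← ENNReal.coe_add]
          exact_mod_cast nnnorm_sub_le (v y) (v x)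
      _ ≤ 4 * (N y ^ (2:ℝ) + N x ^ (2:ℝ)) := sq_add_le_en _ _
  -- Step 5: double integral computation
  have hT1 : ∫⁻ x, ∫⁻ y, N y ^ (2:ℝ) * γe (x - y) = S * A := by
    rw [lintegral_lintegral_swap]
    · calc ∫⁻ y, ∫⁻ x, N y ^ (2:ℝ) * γe (x - y)
          = ∫⁻ y, N y ^ (2:ℝ) * A := by
            refine lintegral_congr fun y => ?_
            have hm : Measurable fun x : ℝ => γe (x - y) := hk₂ y
            rw [lintegral_const_mul _ hm, htrans_right]
        _ = S * A := lintegral_mul_const _ (hNm.pow_const _)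
    · exact (((hNm.pow_const _).comp measurable_snd).mul hKm).aemeasurable
  have hT2 : ∫⁻ x, ∫⁻ y, N x ^ (2:ℝ) * γe (x - y) = S * A := by
    calc ∫⁻ x, ∫⁻ y, N x ^ (2:ℝ) * γe (x - y)
        = ∫⁻ x, N x ^ (2:ℝ) * A := by
          refine lintegral_congr fun x => ?_
          have hm : Measurable fun y : ℝ => γe (x - y) := hk₁ x
          rw [lintegral_const_mul _ hm, htrans_left]
      _ = S * A := lintegral_mul_const _ (hNm.pow_const _)
  have hWint : ∫⁻ x, W x ≤ 8 * (S * A) := by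
    calc ∫⁻ x, W x ≤ ∫⁻ x, 4 * ∫⁻ y, (N y ^ (2:ℝ) + N x ^ (2:ℝ)) * γe (x - y) :=
          lintegral_mono hW_le
      _ = 4 * ∫⁻ x, ∫⁻ y, (N y ^ (2:ℝ) + N x ^ (2:ℝ)) * γe (x - y) := by
          rw [lintegral_const_mul]
          exact Measurable.lintegral_prod_right
            ((((hNm.pow_const _).comp measurable_snd).add
              ((hNm.pow_const _).comp measurable_fst)).mul hKm)
      _ = 4 * ((∫⁻ x, ∫⁻ y, N y ^ (2:ℝ) * γe (x - y)) +
            ∫⁻ x, ∫⁻ y, N x ^ (2:ℝ) * γe (x - y)) := by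
          congr 1
          rw [← lintegral_add_left]
          · refine lintegral_congr fun x => ?_
            have hm5 : Measurable fun y : ℝ => N y ^ (2:ℝ) * γe (x - y) :=
              (hNm.pow_const _).mul (hk₁ x)
            rw [← lintegral_add_left hm5]
            refine lintegral_congr fun y => ?_
            ring
          · exact Measurable.lintegral_prod_right
              ((((hNm.pow_const _).comp measurable_snd)).mul hKm)
      _ = 8 * (S * A) := by rw [hT1, hT2]; ring
  -- Step 6: eLpNorm bound
  have hFv_sq : ∫⁻ x, (‖Fv x‖₊ : ℝ≥0∞) ^ (2:ℝ) ≤ (3 * A) ^ (2:ℝ) * S := by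
    calc ∫⁻ x, (‖Fv x‖₊ : ℝ≥0∞) ^ (2:ℝ) ≤ ∫⁻ x, W x * A := lintegral_mono hpt
      _ = (∫⁻ x, W x) * A := lintegral_mul_const _ hWm
      _ ≤ 8 * (S * A) * A := by gcongr
      _ ≤ (3 * A) ^ (2:ℝ) * S := by
          rw [show ((3:ℝ≥0∞) * A) ^ (2:ℝ) = (3 * A) ^ (2:ℕ) by
            rw [show (2:ℝ) = ((2:ℕ):ℝ) by norm_num, ENNReal.rpow_natCast]]
          calc (8:ℝ≥0∞) * (S * A) * A ≤ 9 * (S * A) * A := by gcongr; norm_num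
            _ = (3 * A) ^ (2:ℕ) * S := by ring
  have hFv_norm : eLpNorm Fv 2 volume ≤ 3 * A * eLpNorm v 2 volume := by
    rw [eLpNorm_eq_lintegral_rpow_enorm_toReal (by norm_num) (by norm_num), hS_eq]
    have h2 : ((2:ℝ≥0∞)).toReal = (2:ℝ) := by norm_num
    rw [h2]
    calc (∫⁻ x, (‖Fv x‖₊ : ℝ≥0∞) ^ (2:ℝ)) ^ (1/2:ℝ)
        ≤ ((3 * A) ^ (2:ℝ) * S) ^ (1/2:ℝ) :=
          ENNReal.rpow_le_rpow hFv_sq (by norm_num)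
      _ = 3 * A * S ^ (1/2:ℝ) := by
          rw [ENNReal.mul_rpow_of_nonneg _ _ (by norm_num : (0:ℝ) ≤ 1/2),
            ← ENNReal.rpow_mul]
          norm_num
  -- transfer back to u
  have hvu : eLpNorm v 2 volume = eLpNorm u 2 volume := eLpNorm_congr_ae huv.symm
  have hFuFv : eLpNorm Fu 2 volume = eLpNorm Fv 2 volume := eLpNorm_congr_ae hFF
  have hmain : eLpNorm Fu 2 volume ≤ 3 * A * eLpNorm u 2 volume := by
    rw [hFuFv, ← hvu]; exact hFv_norm
  have hR_ne : 3 * A * eLpNorm u 2 volume ≠ ⊤ :=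
    ENNReal.mul_ne_top (ENNReal.mul_ne_top (by norm_num) hA_ne) hu.eLpNorm_ne_top
  have hASM : AEStronglyMeasurable Fu volume :=
    hFvSM.aestronglyMeasurable.congr hFF.symm
  refine ⟨⟨hASM, lt_of_le_of_lt hmain hR_ne.lt_top⟩, ?_⟩
  calc (eLpNorm Fu 2 volume).toReal ≤ (3 * A * eLpNorm u 2 volume).toReal :=
        ENNReal.toReal_mono hR_ne hmain
    _ = 3 * A.toReal * (eLpNorm u 2 volume).toReal := by
        rw [ENNReal.toReal_mul, ENNReal.toReal_mul]
        norm_num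
    _ ≤ (3 * A.toReal + 1) * (eLpNorm u 2 volume).toReal := by
        have := ENNReal.toReal_nonneg (a := eLpNorm u 2 volume)
        nlinarith [ENNReal.toReal_nonneg (a := A)]
end

section
/- If u ∈ V and (Ku)(x) = 0 for almost every x ∈ ℝ, then u = 0 almost everywhere on ℝ; that is, the operator K has trivial kernel on V. -/
open MeasureTheory Set

/-- The operator `K` has trivial kernel on `V`. -/
theorem stmt_6 (L : ℝ) (hL : 0 < L) (γ : ℝ → ℝ)
    (hγm : Measurable γ) (hγe : ∀ z, γ (-z) = γ z)
    (hγi : Integrable γ) (hγpos : ∀ z, 0 < γ z) :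
    ∀ u : ℝ → ℝ,
      MemLp u 2 volume → (∀ᵐ x : ℝ, x ∉ Icc (-L) L → u x = 0) →
      (∀ᵐ x : ℝ, (∫ y : ℝ, (u y - u x) * γ (x - y)) = 0) →
      (∀ᵐ x : ℝ, u x = 0) := by
  intro u hu hsupp hK
  set c : ℝ := ∫ z, γ z with hc
  -- u is integrable: it is a.e. equal to its restriction to the compact set Icc (-L) L
  have hindic : u =ᵐ[volume] (Icc (-L) L).indicator u := by
    filter_upwards [hsupp] with x hx
    by_cases h : x ∈ Icc (-L) L
    · simp [indicator_of_mem h]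
    · simp [indicator_of_notMem h, hx h]
  have hu1 : Integrable u volume := by
    have h2 : MemLp ((Icc (-L) L).indicator u) 2 volume := hu.indicator measurableSet_Icc
    have hIOn : IntegrableOn u (Icc (-L) L) volume := by
      have := hu.restrict (s := Icc (-L) L)
      exact this.integrable one_le_two
    have : Integrable ((Icc (-L) L).indicator u) volume :=
      (integrable_indicator_iff measurableSet_Icc).2 hIOn
    exact this.congr hindic.symm
  have hv1 : Integrable (fun x => u x ^ 2) volume := hu.integrable_sq
  -- a.e. existence of the convolution integrals
  have h1 : ∀ᵐ x : ℝ, Integrable (fun y => u y * γ (x - y)) volume :=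
    hu1.ae_convolution_exists (ContinuousLinearMap.mul ℝ ℝ) hγi
  have h2 : ∀ᵐ x : ℝ, Integrable (fun y => u y ^ 2 * γ (x - y)) volume :=
    hv1.ae_convolution_exists (ContinuousLinearMap.mul ℝ ℝ) hγi
  -- from the kernel hypothesis: (u ⋆ γ) x = u x * c a.e.
  have hKeq : ∀ᵐ x : ℝ, (∫ y, u y * γ (x - y)) = u x * c := by
    filter_upwards [hK, h1] with x hx h1x
    have hγx : Integrable (fun y => γ (x - y)) volume := hγi.comp_sub_left x
    have hsplit : (∫ y, (u y - u x) * γ (x - y))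
        = (∫ y, u y * γ (x - y)) - ∫ y, u x * γ (x - y) := by
      rw [← integral_sub h1x (hγx.const_mul (u x))]
      congr 1; ext y; ring
    rw [hsplit, integral_const_mul, integral_sub_left_eq_self γ volume x] at hx
    linarith
  -- the "energy density" g
  set g : ℝ → ℝ := fun x => ∫ y, (u y - u x) ^ 2 * γ (x - y) with hg
  have hgnn : ∀ x, 0 ≤ g x := fun x =>
    integral_nonneg fun y => mul_nonneg (sq_nonneg _) (hγpos _).le
  -- pointwise expansion of g
  have hgeq : g =ᵐ[volume] fun x => (∫ y, u y ^ 2 * γ (x - y)) - c * u x ^ 2 := by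
    filter_upwards [hKeq, h1, h2] with x hkx h1x h2x
    have hγx : Integrable (fun y => γ (x - y)) volume := hγi.comp_sub_left x
    have hexp : (fun y => (u y - u x) ^ 2 * γ (x - y))
        = fun y => (u y ^ 2 * γ (x - y) - (2 * u x) * (u y * γ (x - y)))
            + u x ^ 2 * γ (x - y) := by
      ext y; ring
    have hint1 : Integrable
        (fun y => u y ^ 2 * γ (x - y) - (2 * u x) * (u y * γ (x - y))) volume :=
      h2x.sub (h1x.const_mul _)
    calc g x = ∫ y, (u y ^ 2 * γ (x - y) - (2 * u x) * (u y * γ (x - y)))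
            + u x ^ 2 * γ (x - y) := by rw [hg]; exact congrArg _ hexp
      _ = (∫ y, u y ^ 2 * γ (x - y) - (2 * u x) * (u y * γ (x - y)))
            + ∫ y, u x ^ 2 * γ (x - y) :=
        integral_add hint1 (hγx.const_mul _)
      _ = ((∫ y, u y ^ 2 * γ (x - y)) - (2 * u x) * ∫ y, u y * γ (x - y))
            + u x ^ 2 * ∫ y, γ (x - y) := by
        rw [integral_sub h2x (h1x.const_mul _), integral_const_mul, integral_const_mul]
      _ = (∫ y, u y ^ 2 * γ (x - y)) - c * u x ^ 2 := by
        rw [hkx, integral_sub_left_eq_self γ volume x, ← hc]; ring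
  -- g is integrable with integral 0
  have hH : Integrable (fun x => ∫ y, u y ^ 2 * γ (x - y)) volume :=
    hv1.integrable_convolution (ContinuousLinearMap.mul ℝ ℝ) hγi
  have hgint : Integrable g volume :=
    (hH.sub (hv1.const_mul c)).congr hgeq.symm
  have hgzero : ∫ x, g x = 0 := by
    rw [integral_congr_ae hgeq, integral_sub hH (hv1.const_mul c), integral_const_mul]
    have : (∫ x, (∫ y, u y ^ 2 * γ (x - y))) = (∫ x, u x ^ 2) * c :=
      integral_convolution (ContinuousLinearMap.mul ℝ ℝ) hv1 hγi
    rw [this]; ring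
  have hgae : g =ᵐ[volume] 0 :=
    (integral_eq_zero_iff_of_nonneg_ae (Filter.Eventually.of_forall hgnn) hgint).1 hgzero
  -- consequently, u y = u x for a.e. y, for a.e. x
  have hconst : ∀ᵐ x : ℝ, ∀ᵐ y : ℝ, u y = u x := by
    filter_upwards [hgae, h1, h2, hKeq] with x hgx h1x h2x hkx
    have hγx : Integrable (fun y => γ (x - y)) volume := hγi.comp_sub_left x
    have hintx : Integrable (fun y => (u y - u x) ^ 2 * γ (x - y)) volume := by
      have hexp : (fun y => (u y - u x) ^ 2 * γ (x - y))
          = fun y => (u y ^ 2 * γ (x - y) - (2 * u x) * (u y * γ (x - y)))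
              + u x ^ 2 * γ (x - y) := by
        ext y; ring
      rw [hexp]
      exact (h2x.sub (h1x.const_mul _)).add (hγx.const_mul _)
    have h0 : ∀ᵐ y : ℝ, (u y - u x) ^ 2 * γ (x - y) = 0 := by
      refine (integral_eq_zero_iff_of_nonneg_ae ?_ hintx).1 hgx
      exact Filter.Eventually.of_forall fun y => mul_nonneg (sq_nonneg _) (hγpos _).le
    filter_upwards [h0] with y hy
    have hγne : γ (x - y) ≠ 0 := (hγpos _).ne'
    have : (u y - u x) ^ 2 = 0 := by
      rcases mul_eq_zero.1 hy with h | h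
      · exact h
      · exact absurd h hγne
    have := pow_eq_zero_iff (n := 2) (by norm_num) |>.1 this
    linarith [sub_eq_zero.1 this]
  -- finish: pick a point outside Icc (-L) L where u vanishes
  filter_upwards [hconst] with x hx
  have hres : ∀ᵐ y ∂(volume.restrict (Ioi L)), u y = u x ∧ (y ∉ Icc (-L) L → u y = 0) :=
    ae_restrict_of_ae (hx.and hsupp)
  have hne : (volume.restrict (Ioi L)) ≠ 0 := by
    intro h
    have : (volume.restrict (Ioi L)) (Ioi L) = 0 := by rw [h]; rfl
    rw [Measure.restrict_apply_self] at this
    simp [Real.volume_Ioi] at this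
  haveI : (ae (volume.restrict (Ioi L))).NeBot := ae_neBot.2 hne
  have hmem : ∀ᵐ y ∂(volume.restrict (Ioi L)), y ∈ Ioi L :=
    ae_restrict_mem measurableSet_Ioi
  obtain ⟨y, ⟨hy1, hy2⟩, hy3⟩ := (hres.and hmem).exists
  have hynot : y ∉ Icc (-L) L := fun h => absurd h.2 (not_le.2 hy3)
  rw [← hy1, hy2 hynot]
end

section
/- For every square-integrable function f : Ω → ℝ there exists a square-integrable function u : Ω → ℝ, unique up to equality almost everywhere, such that Γ u(x) − ∫_Ω γ(x − y) u(y) dy = f(x) for almost every x ∈ Ω; that is, the operator u ↦ Γu − γ∗u is a bijection of L²(Ω). -/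
open MeasureTheory Set
open scoped ENNReal NNReal

namespace Stmt7Aux

noncomputable section

variable {L : ℝ} {γ : ℝ → ℝ}

/-- The convolution-type operator. -/
def Kop (γ : ℝ → ℝ) (L : ℝ) (v : ℝ → ℝ) (x : ℝ) : ℝ :=
  ∫ y in Icc (-L) L, γ (x - y) * v y

lemma memℒp_translate (hγ2 : MemLp γ 2 (volume : Measure ℝ)) (x : ℝ) :
    MemLp (fun y => γ (x - y)) 2 (volume : Measure ℝ) :=
  hγ2.comp_measurePreserving (Measure.measurePreserving_sub_left volume x)

lemma integrable_translate (hγi : Integrable γ (volume : Measure ℝ)) (x : ℝ) :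
    Integrable (fun y => γ (x - y)) (volume : Measure ℝ) :=
  ((Measure.measurePreserving_sub_left (volume : Measure ℝ) x).integrable_comp
    hγi.aestronglyMeasurable).mpr hγi

lemma mul_integrable {μ : Measure ℝ} {f g : ℝ → ℝ} (hf : MemLp f 2 μ) (hg : MemLp g 2 μ) :
    Integrable (fun y => f y * g y) μ := by
  have hint : Integrable (fun y => (f y ^ 2 + g y ^ 2) / 2) μ :=
    (hf.integrable_sq.add hg.integrable_sq).div_const 2
  refine hint.mono' (hf.aestronglyMeasurable.mul hg.aestronglyMeasurable) ?_
  filter_upwards with y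
  rw [Real.norm_eq_abs, abs_mul]
  nlinarith [sq_nonneg (|f y| - |g y|), sq_abs (f y), sq_abs (g y), abs_nonneg (f y),
    abs_nonneg (g y)]

/-- the integrand of `Kop` is integrable, for every `x`. -/
lemma kop_integrand_integrable (hγ2 : MemLp γ 2 (volume : Measure ℝ))
    {v : ℝ → ℝ} (hv : MemLp v 2 (volume.restrict (Icc (-L) L))) (x : ℝ) :
    Integrable (fun y => γ (x - y) * v y) (volume.restrict (Icc (-L) L)) :=
  mul_integrable ((memℒp_translate hγ2 x).restrict _) hv

lemma kop_congr {u v : ℝ → ℝ} (h : u =ᵐ[volume.restrict (Icc (-L) L)] v) :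
    Kop γ L u = Kop γ L v := by
  funext x
  exact integral_congr_ae (h.mono fun y hy => by simp only [hy])

lemma kop_sub (hγ2 : MemLp γ 2 (volume : Measure ℝ)) {u v : ℝ → ℝ}
    (hu : MemLp u 2 (volume.restrict (Icc (-L) L)))
    (hv : MemLp v 2 (volume.restrict (Icc (-L) L))) (x : ℝ) :
    Kop γ L (u - v) x = Kop γ L u x - Kop γ L v x := by
  have h1 := kop_integrand_integrable hγ2 hu x
  have h2 := kop_integrand_integrable hγ2 hv x
  simp only [Kop, Pi.sub_apply, mul_sub]
  exact integral_sub h1 h2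

/-- Row bound for the kernel. -/
lemma row_bound (hL : 0 < L) (hγi : Integrable γ) (hγnn : ∀ z, 0 ≤ γ z)
    {x : ℝ} (hx : x ∈ Icc (-L) L) :
    ∫ y in Icc (-L) L, γ (x - y) ≤ ∫ z in Icc (-(2*L)) (2*L), γ z := by
  have hLL : (-L) ≤ L := by linarith
  have h1 : ∫ y in Icc (-L) L, γ (x - y) = ∫ y in (-L)..L, γ (x - y) := by
    rw [intervalIntegral.integral_of_le hLL, integral_Icc_eq_integral_Ioc]
  rw [h1, intervalIntegral.integral_comp_sub_left (fun z => γ z) x]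
  have h2 : x - L ≤ x - (-L) := by linarith
  rw [intervalIntegral.integral_of_le h2]
  refine setIntegral_mono_set hγi.integrableOn
    (Filter.Eventually.of_forall fun z => hγnn z) (HasSubset.Subset.eventuallyLE ?_)
  intro z hz
  obtain ⟨hx1, hx2⟩ := hx
  obtain ⟨h1', h2'⟩ := hz
  exact ⟨by linarith, by linarith⟩

lemma aesm_kernel (hγm : AEStronglyMeasurable γ (volume : Measure ℝ)) (s : Set ℝ) :
    AEStronglyMeasurable (fun p : ℝ × ℝ => γ (p.1 - p.2))
      ((volume.restrict s).prod (volume.restrict s)) := by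
  have h := quasiMeasurePreserving_sub (volume : Measure ℝ) (volume : Measure ℝ)
  have h2 : Measure.QuasiMeasurePreserving (fun p : ℝ × ℝ => p.1 - p.2)
      ((volume.restrict s).prod (volume.restrict s)) volume :=
    h.mono ((Measure.absolutelyContinuous_of_le Measure.restrict_le_self).prod
      (Measure.absolutelyContinuous_of_le Measure.restrict_le_self))
      Measure.AbsolutelyContinuous.rfl
  exact hγm.comp_quasiMeasurePreserving h2

lemma aesm_kernel_mul (hγm : AEStronglyMeasurable γ (volume : Measure ℝ))
    {v : ℝ → ℝ} (hv : AEStronglyMeasurable v (volume.restrict (Icc (-L) L))) :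
    AEStronglyMeasurable (fun p : ℝ × ℝ => γ (p.1 - p.2) * v p.2)
      ((volume.restrict (Icc (-L) L)).prod (volume.restrict (Icc (-L) L))) :=
  (aesm_kernel hγm _).mul hv.comp_snd

lemma kop_aestronglyMeasurable (hγm : AEStronglyMeasurable γ (volume : Measure ℝ))
    {v : ℝ → ℝ} (hv : AEStronglyMeasurable v (volume.restrict (Icc (-L) L))) :
    AEStronglyMeasurable (Kop γ L v) (volume.restrict (Icc (-L) L)) :=
  (aesm_kernel_mul hγm hv).integral_prod_right'


lemma hsq_ennreal (a : ℝ≥0∞) : a ^ (2:ℝ) = a * a := by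
  rw [show (2:ℝ) = ((2:ℕ):ℝ) by norm_num, ENNReal.rpow_natCast, sq]

lemma hhalf_ennreal (a : ℝ≥0∞) : a ^ (1/2:ℝ) * a ^ (1/2:ℝ) = a := by
  rw [← hsq_ennreal, ← ENNReal.rpow_mul]
  norm_num

lemma kop_eLpNorm_le (hL : 0 < L) (hγi : Integrable γ) (hγ2 : MemLp γ 2 (volume : Measure ℝ))
    (hγe : ∀ z, γ (-z) = γ z) (hγpos : ∀ z, 0 < γ z)
    {v : ℝ → ℝ} (hv : MemLp v 2 (volume.restrict (Icc (-L) L))) :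
    eLpNorm (Kop γ L v) 2 (volume.restrict (Icc (-L) L)) ≤
      ENNReal.ofReal (∫ z in Icc (-(2*L)) (2*L), γ z) *
        eLpNorm v 2 (volume.restrict (Icc (-L) L)) := by
  set μ := volume.restrict (Icc (-L) L) with hμ
  set c := ∫ z in Icc (-(2*L)) (2*L), γ z with hc
  set C := ENNReal.ofReal c with hC
  have hCtop : C ≠ ⊤ := ENNReal.ofReal_ne_top
  set G : ℝ → ℝ → ℝ≥0∞ := fun x y => ENNReal.ofReal (γ (x - y)) with hG
  set V : ℝ → ℝ≥0∞ := fun y => (‖v y‖₊ : ℝ≥0∞) with hV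
  have hVtop : ∀ y, V y * V y ≠ ⊤ := fun y =>
    ENNReal.mul_ne_top ENNReal.coe_ne_top ENNReal.coe_ne_top
  -- measurability
  have hGx : ∀ x, AEMeasurable (fun y => G x y) μ := fun x =>
    ((memℒp_translate hγ2 x).restrict
      (Icc (-L) L)).aestronglyMeasurable.aemeasurable.ennreal_ofReal
  have hVm : AEMeasurable V μ := hv.aestronglyMeasurable.enorm
  -- row/column bounds
  have hrow : ∀ x ∈ Icc (-L) L, ∫⁻ y, G x y ∂μ ≤ C := by
    intro x hx
    rw [hG, ← ofReal_integral_eq_lintegral_ofReal ((integrable_translate hγi x).restrict)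
      (Filter.Eventually.of_forall fun y => (hγpos _).le)]
    exact ENNReal.ofReal_le_ofReal (row_bound hL hγi (fun z => (hγpos z).le) hx)
  have hswap : ∀ x y : ℝ, γ (x - y) = γ (y - x) := fun x y => by
    rw [← neg_sub y x, hγe]
  have hcol : ∀ y ∈ Icc (-L) L, ∫⁻ x, G x y ∂μ ≤ C := by
    intro y hy
    have hGy : (fun x => G x y) = fun x => ENNReal.ofReal (γ (y - x)) := by
      funext x; rw [hG]; simp only; rw [hswap]
    rw [hGy, ← ofReal_integral_eq_lintegral_ofReal ((integrable_translate hγi y).restrict)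
      (Filter.Eventually.of_forall fun x => (hγpos _).le)]
    exact ENNReal.ofReal_le_ofReal (row_bound hL hγi (fun z => (hγpos z).le) hy)
  -- pointwise bound on the operator
  have hKpt : ∀ x, (‖Kop γ L v x‖₊ : ℝ≥0∞) ≤ ∫⁻ y, G x y * V y ∂μ := by
    intro x
    have h0 : Kop γ L v x = ∫ y, γ (x - y) * v y ∂μ := rfl
    rw [h0]
    refine (enorm_integral_le_lintegral_enorm _).trans_eq ?_
    refine lintegral_congr fun y => ?_
    rw [enorm_mul, Real.enorm_eq_ofReal (hγpos _).le]
    rfl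
  -- Cauchy–Schwarz
  have hCS : ∀ x, (∫⁻ y, G x y * V y ∂μ) ≤
      (∫⁻ y, G x y ∂μ) ^ (1/2:ℝ) * (∫⁻ y, G x y * (V y * V y) ∂μ) ^ (1/2:ℝ) := by
    intro x
    have hpq : Real.HolderConjugate 2 2 := Real.HolderConjugate.two_two
    have hf : AEMeasurable (fun y => G x y ^ (1/2:ℝ)) μ := (hGx x).pow_const _
    have hg : AEMeasurable (fun y => G x y ^ (1/2:ℝ) * V y) μ := hf.mul hVm
    have h := ENNReal.lintegral_mul_le_Lp_mul_Lq μ hpq hf hg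
    have e1 : ∫⁻ a, ((fun y => G x y ^ (1/2:ℝ)) * fun y => G x y ^ (1/2:ℝ) * V y) a ∂μ
        = ∫⁻ y, G x y * V y ∂μ := by
      refine lintegral_congr fun y => ?_
      simp only [Pi.mul_apply]
      rw [← mul_assoc, hhalf_ennreal]
    have e2 : ∫⁻ a, (G x a ^ (1/2:ℝ)) ^ (2:ℝ) ∂μ = ∫⁻ y, G x y ∂μ := by
      refine lintegral_congr fun y => ?_
      rw [← ENNReal.rpow_mul]
      norm_num
    have e3 : ∫⁻ a, (G x a ^ (1/2:ℝ) * V a) ^ (2:ℝ) ∂μ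
        = ∫⁻ y, G x y * (V y * V y) ∂μ := by
      refine lintegral_congr fun y => ?_
      rw [ENNReal.mul_rpow_of_nonneg _ _ (by norm_num : (0:ℝ) ≤ 2), ← ENNReal.rpow_mul,
        hsq_ennreal (V y)]
      norm_num
    rw [e1, e2, e3] at h
    exact h
  -- product measurability for Tonelli
  have hmeas : AEMeasurable
      (Function.uncurry fun x y => G x y * (V y * V y)) (μ.prod μ) := by
    have h1 : AEMeasurable (fun p : ℝ × ℝ => G p.1 p.2) (μ.prod μ) :=
      (aesm_kernel hγi.aestronglyMeasurable (Icc (-L) L)).aemeasurable.ennreal_ofReal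
    have h2 : AEMeasurable (fun p : ℝ × ℝ => V p.2) (μ.prod μ) :=
      hv.aestronglyMeasurable.comp_snd.enorm
    exact h1.mul (h2.mul h2)
  -- main estimate
  have hmain : ∫⁻ x, (‖Kop γ L v x‖₊ : ℝ≥0∞) ^ (2:ℝ) ∂μ ≤ C * C * ∫⁻ y, V y * V y ∂μ := by
    have step1 : ∫⁻ x, (‖Kop γ L v x‖₊ : ℝ≥0∞) ^ (2:ℝ) ∂μ ≤
        ∫⁻ x, C * ∫⁻ y, G x y * (V y * V y) ∂μ ∂μ := by
      refine lintegral_mono_ae ?_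
      filter_upwards [ae_restrict_mem measurableSet_Icc] with x hx
      calc (‖Kop γ L v x‖₊ : ℝ≥0∞) ^ (2:ℝ)
          ≤ (∫⁻ y, G x y * V y ∂μ) ^ (2:ℝ) := ENNReal.rpow_le_rpow (hKpt x) (by norm_num)
        _ ≤ ((∫⁻ y, G x y ∂μ) ^ (1/2:ℝ) *
              (∫⁻ y, G x y * (V y * V y) ∂μ) ^ (1/2:ℝ)) ^ (2:ℝ) :=
            ENNReal.rpow_le_rpow (hCS x) (by norm_num)
        _ = (∫⁻ y, G x y ∂μ) * (∫⁻ y, G x y * (V y * V y) ∂μ) := by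
            rw [ENNReal.mul_rpow_of_nonneg _ _ (by norm_num : (0:ℝ) ≤ 2),
              ← ENNReal.rpow_mul, ← ENNReal.rpow_mul]
            norm_num
        _ ≤ C * ∫⁻ y, G x y * (V y * V y) ∂μ := mul_le_mul_left (hrow x hx) _
    calc ∫⁻ x, (‖Kop γ L v x‖₊ : ℝ≥0∞) ^ (2:ℝ) ∂μ
        ≤ ∫⁻ x, C * ∫⁻ y, G x y * (V y * V y) ∂μ ∂μ := step1
      _ = C * ∫⁻ x, ∫⁻ y, G x y * (V y * V y) ∂μ ∂μ := lintegral_const_mul' C _ hCtop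
      _ = C * ∫⁻ y, ∫⁻ x, G x y * (V y * V y) ∂μ ∂μ := by
          rw [lintegral_lintegral_swap hmeas]
      _ ≤ C * (C * ∫⁻ y, V y * V y ∂μ) := by
          refine mul_le_mul_right ?_ C
          rw [← lintegral_const_mul' C _ hCtop]
          refine lintegral_mono_ae ?_
          filter_upwards [ae_restrict_mem measurableSet_Icc] with y hy
          rw [lintegral_mul_const' (V y * V y) _ (hVtop y)]
          exact mul_le_mul_left (hcol y hy) _
      _ = C * C * ∫⁻ y, V y * V y ∂μ := by rw [mul_assoc]
  -- convert to eLpNorm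
  have h2 : eLpNorm (Kop γ L v) 2 μ
      = (∫⁻ x, (‖Kop γ L v x‖₊ : ℝ≥0∞) ^ (2:ℝ) ∂μ) ^ (1/2:ℝ) := by
    rw [eLpNorm_eq_lintegral_rpow_enorm_toReal two_ne_zero ENNReal.ofNat_ne_top]
    norm_num
    rfl
  have h3 : eLpNorm v 2 μ = (∫⁻ y, V y * V y ∂μ) ^ (1/2:ℝ) := by
    rw [eLpNorm_eq_lintegral_rpow_enorm_toReal two_ne_zero ENNReal.ofNat_ne_top]
    have : ∀ y : ℝ, ‖v y‖ₑ ^ ((2:ℝ≥0∞).toReal) = V y * V y := fun y => by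
      rw [ENNReal.toReal_ofNat, hsq_ennreal]
      rfl
    rw [lintegral_congr this]
    norm_num
  rw [h2, h3]
  calc (∫⁻ x, (‖Kop γ L v x‖₊ : ℝ≥0∞) ^ (2:ℝ) ∂μ) ^ (1/2:ℝ)
      ≤ (C * C * ∫⁻ y, V y * V y ∂μ) ^ (1/2:ℝ) := ENNReal.rpow_le_rpow hmain (by norm_num)
    _ = C * (∫⁻ y, V y * V y ∂μ) ^ (1/2:ℝ) := by
        rw [ENNReal.mul_rpow_of_nonneg _ _ (by norm_num : (0:ℝ) ≤ 1/2), ← hsq_ennreal C,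
          ← ENNReal.rpow_mul]
        norm_num

lemma kop_memℒp (hL : 0 < L) (hγi : Integrable γ) (hγ2 : MemLp γ 2 (volume : Measure ℝ))
    (hγe : ∀ z, γ (-z) = γ z) (hγpos : ∀ z, 0 < γ z)
    {v : ℝ → ℝ} (hv : MemLp v 2 (volume.restrict (Icc (-L) L))) :
    MemLp (Kop γ L v) 2 (volume.restrict (Icc (-L) L)) := by
  refine ⟨kop_aestronglyMeasurable hγi.aestronglyMeasurable hv.aestronglyMeasurable, ?_⟩
  refine lt_of_le_of_lt (kop_eLpNorm_le hL hγi hγ2 hγe hγpos hv) ?_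
  exact ENNReal.mul_lt_top ENNReal.ofReal_lt_top hv.2

end

end Stmt7Aux

/-- The operator `u ↦ Γu − γ∗u` is a bijection of `L²(Ω)`: for every square-integrable `f`
there is a square-integrable `u`, unique up to a.e. equality, with `Γu − γ∗u = f` a.e. -/
theorem stmt_7 (L : ℝ) (hL : 0 < L) (γ : ℝ → ℝ)
    (hγe : ∀ z, γ (-z) = γ z) (hγi : Integrable γ) (hγ2 : MemLp γ 2 volume)
    (hγpos : ∀ z, 0 < γ z) :
    ∀ f : ℝ → ℝ, MemLp f 2 (volume.restrict (Icc (-L) L)) →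
      ∃ u : ℝ → ℝ, MemLp u 2 (volume.restrict (Icc (-L) L)) ∧
        (∀ᵐ x ∂(volume.restrict (Icc (-L) L)),
          (∫ z : ℝ, γ z) * u x - (∫ y in Icc (-L) L, γ (x - y) * u y) = f x) ∧
        (∀ u' : ℝ → ℝ, MemLp u' 2 (volume.restrict (Icc (-L) L)) →
          (∀ᵐ x ∂(volume.restrict (Icc (-L) L)),
            (∫ z : ℝ, γ z) * u' x - (∫ y in Icc (-L) L, γ (x - y) * u' y) = f x) →
          u' =ᵐ[volume.restrict (Icc (-L) L)] u) := by
  intro f hf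
  set μ := volume.restrict (Icc (-L) L) with hμdef
  haveI : Fact ((1:ℝ≥0∞) ≤ 2) := ⟨one_le_two⟩
  set Γ := ∫ z, γ z with hΓdef
  have hγnn : ∀ z, 0 ≤ γ z := fun z => (hγpos z).le
  have hΓpos : 0 < Γ := by
    rw [hΓdef, integral_pos_iff_support_of_nonneg_ae (Filter.Eventually.of_forall hγnn) hγi]
    have hsupp : Function.support γ = univ := by
      ext z; simp [Function.mem_support, (hγpos z).ne']
    rw [hsupp]
    calc (0:ℝ≥0∞) < volume (Icc (0:ℝ) 1) := by rw [Real.volume_Icc]; norm_num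
      _ ≤ volume (univ : Set ℝ) := measure_mono (subset_univ _)
  have hΓne : Γ ≠ 0 := hΓpos.ne'
  set c := ∫ z in Icc (-(2*L)) (2*L), γ z with hcdef
  have hc0 : 0 ≤ c := setIntegral_nonneg measurableSet_Icc fun z _ => hγnn z
  have hcΓ : c < Γ := by
    have hsplit := integral_add_compl
      (measurableSet_Icc : MeasurableSet (Icc (-(2*L)) (2*L))) hγi
    have hpos : 0 < ∫ z in (Icc (-(2*L)) (2*L))ᶜ, γ z := by
      rw [setIntegral_pos_iff_support_of_nonneg_ae (Filter.Eventually.of_forall hγnn)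
        hγi.integrableOn]
      have hsupp : Function.support γ ∩ (Icc (-(2*L)) (2*L))ᶜ = (Icc (-(2*L)) (2*L))ᶜ := by
        ext z; simp [Function.mem_support, (hγpos z).ne']
      rw [hsupp]
      calc (0:ℝ≥0∞) < volume (Ioo (2*L) (2*L+1)) := by rw [Real.volume_Ioo]; norm_num
        _ ≤ volume ((Icc (-(2*L)) (2*L))ᶜ) := by
            refine measure_mono fun z hz => ?_
            simp only [mem_compl_iff, mem_Icc, not_and, not_le]
            intro _
            exact hz.1
    rw [hΓdef, ← hsplit, ← hcdef]
    linarith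
  -- the fixed-point setup in L²
  have hmemK : ∀ w : Lp ℝ 2 μ, MemLp (Stmt7Aux.Kop γ L ⇑w) 2 μ := fun w =>
    Stmt7Aux.kop_memℒp hL hγi hγ2 hγe hγpos (Lp.memLp w)
  set T : Lp ℝ 2 μ → Lp ℝ 2 μ :=
    fun w => Γ⁻¹ • (hf.toLp f + MemLp.toLp _ (hmemK w)) with hTdef
  have hKlip : ∀ w w' : Lp ℝ 2 μ,
      ‖MemLp.toLp _ (hmemK w) - MemLp.toLp _ (hmemK w')‖ ≤ c * ‖w - w'‖ := by
    intro w w'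
    rw [Lp.norm_def, Lp.norm_def]
    have hae : (⇑(MemLp.toLp _ (hmemK w) - MemLp.toLp _ (hmemK w')) : ℝ → ℝ)
        =ᵐ[μ] Stmt7Aux.Kop γ L (⇑w - ⇑w') := by
      filter_upwards [Lp.coeFn_sub (MemLp.toLp _ (hmemK w)) (MemLp.toLp _ (hmemK w')),
        MemLp.coeFn_toLp (hmemK w), MemLp.coeFn_toLp (hmemK w')] with x h1 h2 h3
      rw [h1]
      simp only [Pi.sub_apply]
      rw [h2, h3, Stmt7Aux.kop_sub hγ2 (Lp.memLp w) (Lp.memLp w') x]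
    rw [eLpNorm_congr_ae hae]
    have hb := Stmt7Aux.kop_eLpNorm_le hL hγi hγ2 hγe hγpos ((Lp.memLp w).sub (Lp.memLp w'))
    have he : eLpNorm (⇑w - ⇑w') 2 μ = eLpNorm (⇑(w - w')) 2 μ :=
      (eLpNorm_congr_ae (Lp.coeFn_sub w w')).symm
    rw [he] at hb
    have hfin : ENNReal.ofReal c * eLpNorm (⇑(w - w')) 2 μ ≠ ⊤ :=
      ENNReal.mul_ne_top ENNReal.ofReal_ne_top (Lp.eLpNorm_ne_top (w - w'))
    calc (eLpNorm (Stmt7Aux.Kop γ L (⇑w - ⇑w')) 2 μ).toReal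
        ≤ (ENNReal.ofReal c * eLpNorm (⇑(w - w')) 2 μ).toReal := ENNReal.toReal_mono hfin hb
      _ = c * (eLpNorm (⇑(w - w')) 2 μ).toReal := by
          rw [ENNReal.toReal_mul, ENNReal.toReal_ofReal hc0]
  have hdist : ∀ w w' : Lp ℝ 2 μ, dist (T w) (T w') ≤ (Γ⁻¹ * c) * dist w w' := by
    intro w w'
    rw [dist_eq_norm, dist_eq_norm]
    have hTsub : T w - T w' = Γ⁻¹ • (MemLp.toLp _ (hmemK w) - MemLp.toLp _ (hmemK w')) := by
      rw [hTdef]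
      simp only
      rw [← smul_sub]
      congr 1
      abel
    rw [hTsub, norm_smul, Real.norm_eq_abs, abs_of_pos (inv_pos.mpr hΓpos)]
    calc Γ⁻¹ * ‖MemLp.toLp _ (hmemK w) - MemLp.toLp _ (hmemK w')‖
        ≤ Γ⁻¹ * (c * ‖w - w'‖) :=
          mul_le_mul_of_nonneg_left (hKlip w w') (inv_nonneg.mpr hΓpos.le)
      _ = (Γ⁻¹ * c) * ‖w - w'‖ := by ring
    -- end
  set K : ℝ≥0 := ⟨Γ⁻¹ * c, by positivity⟩ with hKdef
  have hK1 : K < 1 := by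
    rw [← NNReal.coe_lt_coe]
    show Γ⁻¹ * c < 1
    rw [inv_mul_eq_div]
    exact (div_lt_one hΓpos).mpr hcΓ
  have hcontr : ContractingWith K T :=
    ⟨hK1, LipschitzWith.of_dist_le_mul fun w w' => hdist w w'⟩
  haveI : Nonempty (Lp ℝ 2 μ) := ⟨0⟩
  set u0 : Lp ℝ 2 μ := ContractingWith.fixedPoint T hcontr with hu0def
  have hfix : T u0 = u0 := hcontr.fixedPoint_isFixedPt
  have hTae : ∀ w : Lp ℝ 2 μ,
      ⇑(T w) =ᵐ[μ] fun x => Γ⁻¹ * (f x + Stmt7Aux.Kop γ L (⇑w) x) := by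
    intro w
    rw [hTdef]
    simp only
    filter_upwards [Lp.coeFn_smul Γ⁻¹ (hf.toLp f + MemLp.toLp _ (hmemK w)),
      Lp.coeFn_add (hf.toLp f) (MemLp.toLp _ (hmemK w)),
      hf.coeFn_toLp, MemLp.coeFn_toLp (hmemK w)] with x h1 h2 h3 h4
    rw [h1]
    simp only [Pi.smul_apply, smul_eq_mul]
    rw [h2]
    simp only [Pi.add_apply]
    rw [h3, h4]
  refine ⟨⇑u0, Lp.memLp u0, ?_, ?_⟩
  · have hae : ⇑(T u0) =ᵐ[μ] ⇑u0 := by rw [hfix]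
    filter_upwards [hae, hTae u0] with x h1 h2
    have h5 : (⇑u0 : ℝ → ℝ) x = Γ⁻¹ * (f x + Stmt7Aux.Kop γ L (⇑u0) x) := h1.symm.trans h2
    show Γ * (⇑u0 : ℝ → ℝ) x - Stmt7Aux.Kop γ L (⇑u0) x = f x
    field_simp at h5
    linarith
  · intro u' hu' heq
    set w := hu'.toLp u' with hwdef
    have hKcongr : Stmt7Aux.Kop γ L (⇑w) = Stmt7Aux.Kop γ L u' :=
      Stmt7Aux.kop_congr hu'.coeFn_toLp
    have hfixw : Function.IsFixedPt T w := by
      apply Lp.ext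
      refine (hTae w).trans ?_
      filter_upwards [heq, hu'.coeFn_toLp] with x h1 h2
      have h1' : Γ * u' x - Stmt7Aux.Kop γ L u' x = f x := h1
      rw [hKcongr, h2]
      field_simp
      linarith
    have hwu : w = u0 := hcontr.fixedPoint_unique hfixw
    rw [← hwu]
    exact hu'.coeFn_toLp.symm
end

section
/- The linear span of the family consisting of the constant function 1 together with the functions x ↦ sin((2j − 1)πx/(2L)) and x ↦ cos((2j − 1)πx/(2L)) for j = 1, 2, 3, … is dense in L²([−L, L]). -/
open MeasureTheory Set
open AddCircle ENNReal

lemma trig_unif (L : ℝ) (hL : 0 < L) (g : ℝ → ℝ) (hg : Continuous g)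
    (h₁ : g (-L) = 0) (h₂ : g L = 0) {ε : ℝ} (hε : 0 < ε) :
    ∃ (n : ℕ) (cs cc : ℕ → ℝ), ∀ x ∈ Icc (-L) L,
      |g x - ∑ j ∈ Finset.range n,
        (cs j * Real.sin ((2 * (j : ℝ) + 1) * Real.pi * x / (2 * L)) +
         cc j * Real.cos ((2 * (j : ℝ) + 1) * Real.pi * x / (2 * L)))| ≤ ε := by
  haveI : Fact (0 < 2 * L) := ⟨by linarith⟩
  set θ : ℝ → ℝ := fun x => Real.pi * x / (2 * L) with hθ
  set k : ℝ → ℂ := fun x => Complex.exp (-(↑(θ x) * Complex.I)) * (g x : ℂ) with hk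
  have hkcont : Continuous k := by fun_prop
  have hends : k (-L) = k (-L + 2 * L) := by
    have : -L + 2 * L = L := by ring
    rw [this]; simp [hk, h₁, h₂]
  set H : C(AddCircle (2 * L), ℂ) :=
    ⟨AddCircle.liftIco (2 * L) (-L) k,
      AddCircle.liftIco_continuous hends hkcont.continuousOn⟩ with hH
  have hmem : H ∈ closure ((Submodule.span ℂ (Set.range (@fourier (2 * L)))) : Set _) := by
    rw [← Submodule.topologicalClosure_coe, span_fourier_closure_eq_top]
    trivial
  obtain ⟨v, hv_span, hv_dist⟩ := Metric.mem_closure_iff.mp hmem ε hε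
  obtain ⟨c, hc⟩ := Finsupp.mem_span_range_iff_exists_finsupp.mp hv_span
  -- pointwise estimate on Ico
  have key : ∀ x ∈ Ico (-L) L,
      ‖(g x : ℂ) - ∑ i ∈ c.support,
        c i * Complex.exp (↑((2 * (i : ℝ) + 1) * θ x) * Complex.I)‖ < ε := by
    intro x hx
    have hx' : x ∈ Ico (-L) (-L + 2 * L) := ⟨hx.1, by have := hx.2; linarith⟩
    have h1 : H ↑x = k x := by
      show AddCircle.liftIco (2 * L) (-L) k ↑x = k x
      exact AddCircle.liftIco_coe_apply hx'
    have h2 : v ↑x = ∑ i ∈ c.support, c i • fourier i (↑x : AddCircle (2 * L)) := by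
      rw [← hc]
      rw [Finsupp.sum]
      simp
    have h3 : dist (H ↑x) (v ↑x) < ε :=
      lt_of_le_of_lt (ContinuousMap.dist_apply_le_dist _) hv_dist
    rw [h1, h2] at h3
    have h4 : ‖k x - ∑ i ∈ c.support, c i • fourier i (↑x : AddCircle (2 * L))‖ < ε := by
      rwa [dist_eq_norm] at h3
    have h5 : ‖Complex.exp (↑(θ x) * Complex.I)‖ = 1 := Complex.norm_exp_ofReal_mul_I _
    calc ‖(g x : ℂ) - ∑ i ∈ c.support,
            c i * Complex.exp (↑((2 * (i : ℝ) + 1) * θ x) * Complex.I)‖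
        = ‖Complex.exp (↑(θ x) * Complex.I) *
            (k x - ∑ i ∈ c.support, c i • fourier i (↑x : AddCircle (2 * L)))‖ := by
          rw [mul_sub]
          congr 2
          · rw [hk]
            simp only []
            rw [← mul_assoc, ← Complex.exp_add]
            simp
          · rw [Finset.mul_sum]
            refine Finset.sum_congr rfl fun i _ => ?_
            rw [smul_eq_mul, fourier_coe_apply]
            have he : Complex.exp (↑(θ x) * Complex.I) *
                Complex.exp (2 * ↑Real.pi * Complex.I * ↑i * ↑x / ↑(2 * L)) =
                Complex.exp (↑((2 * (i : ℝ) + 1) * θ x) * Complex.I) := by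
              rw [← Complex.exp_add]
              congr 1
              have hL2 : (2 * L : ℂ) ≠ 0 := by norm_cast; positivity
              push_cast [hθ]
              field_simp
              ring
            rw [← he]
            ring
      _ = ‖k x - ∑ i ∈ c.support, c i • fourier i (↑x : AddCircle (2 * L))‖ := by
          rw [norm_mul, h5, one_mul]
      _ < ε := h4
  classical
  set n : ℕ := (c.support.sup fun i => (max i (-1 - i)).toNat) + 1 with hn
  set cs : ℕ → ℝ := fun j => -(c (j : ℤ)).im + (c (-1 - (j : ℤ))).im with hcs
  set cc : ℕ → ℝ := fun j => (c (j : ℤ)).re + (c (-1 - (j : ℤ))).re with hcc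
  refine ⟨n, cs, cc, ?_⟩
  set S : ℤ → ℝ → ℝ := fun i x =>
    (c i * Complex.exp (↑((2 * (i : ℝ) + 1) * θ x) * Complex.I)).re with hS
  have sval : ∀ (i : ℤ) (x : ℝ), S i x =
      (c i).re * Real.cos ((2 * (i : ℝ) + 1) * θ x)
      - (c i).im * Real.sin ((2 * (i : ℝ) + 1) * θ x) := by
    intro i x
    simp only [hS]
    rw [Complex.mul_re, Complex.exp_ofReal_mul_I_re, Complex.exp_ofReal_mul_I_im]
  have hsum : ∀ x : ℝ, (∑ j ∈ Finset.range n,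
      (cs j * Real.sin ((2 * (j : ℝ) + 1) * Real.pi * x / (2 * L)) +
       cc j * Real.cos ((2 * (j : ℝ) + 1) * Real.pi * x / (2 * L))))
      = ∑ i ∈ c.support, S i x := by
    intro x
    have step1 : ∀ j : ℕ,
        cs j * Real.sin ((2 * (j : ℝ) + 1) * Real.pi * x / (2 * L)) +
        cc j * Real.cos ((2 * (j : ℝ) + 1) * Real.pi * x / (2 * L))
        = S (j : ℤ) x + S (-1 - (j : ℤ)) x := by
      intro j
      have hjj : (2 * (j : ℝ) + 1) * Real.pi * x / (2 * L) = (2 * (j : ℝ) + 1) * θ x := by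
        rw [hθ]; ring
      rw [hjj, sval, sval]
      have e0 : (2 * (((j : ℤ) : ℝ)) + 1) = (2 * (j : ℝ) + 1) := by push_cast; ring
      have e1 : (2 * (((-1 - (j : ℤ)) : ℤ) : ℝ) + 1) * θ x = -((2 * (j : ℝ) + 1) * θ x) := by
        push_cast; ring
      rw [e0, e1, Real.cos_neg, Real.sin_neg, hcs, hcc]
      ring
    rw [Finset.sum_congr rfl fun j _ => step1 j, Finset.sum_add_distrib]
    set Ip : Finset ℤ := (Finset.range n).image (fun j : ℕ => (j : ℤ)) with hIp
    set Im : Finset ℤ := (Finset.range n).image (fun j : ℕ => -1 - (j : ℤ)) with hIm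
    have hdisj : Disjoint Ip Im := by
      rw [Finset.disjoint_left]
      intro a ha hb
      simp only [hIp, hIm, Finset.mem_image] at ha hb
      obtain ⟨j, _, rfl⟩ := ha
      obtain ⟨j', _, h⟩ := hb
      have h0 : (0:ℤ) ≤ (j:ℤ) := Int.natCast_nonneg _
      have h0' : (0:ℤ) ≤ (j':ℤ) := Int.natCast_nonneg _
      linarith
    have h1 : ∑ i ∈ Ip, S i x = ∑ j ∈ Finset.range n, S (j : ℤ) x := by
      rw [hIp]
      exact Finset.sum_image (fun a _ b _ h => by exact_mod_cast h)
    have h2 : ∑ i ∈ Im, S i x = ∑ j ∈ Finset.range n, S (-1 - (j : ℤ)) x := by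
      rw [hIm]
      exact Finset.sum_image (fun a _ b _ h => by
        have : (a : ℤ) = b := by linarith
        exact_mod_cast this)
    rw [← h1, ← h2, ← Finset.sum_union hdisj]
    have hsub : c.support ⊆ Ip ∪ Im := by
      intro i hi
      have hle : (max i (-1 - i)).toNat ≤ c.support.sup (fun i : ℤ => (max i (-1 - i)).toNat) :=
        Finset.le_sup (f := fun i : ℤ => (max i (-1 - i)).toNat) hi
      have hn' : ∀ m : ℕ, m ≤ (max i (-1 - i)).toNat → m < n := by
        intro m hm; rw [hn]; exact Nat.lt_succ_of_le (hm.trans hle)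
      rcases le_or_gt 0 i with h | h
      · apply Finset.mem_union_left
        rw [hIp, Finset.mem_image]
        exact ⟨i.toNat, Finset.mem_range.mpr (hn' _ (Int.toNat_le_toNat (le_max_left _ _))),
          Int.toNat_of_nonneg h⟩
      · apply Finset.mem_union_right
        rw [hIm, Finset.mem_image]
        exact ⟨(-1 - i).toNat, Finset.mem_range.mpr (hn' _ (Int.toNat_le_toNat (le_max_right _ _))),
          by rw [Int.toNat_of_nonneg (by linarith : (0:ℤ) ≤ -1 - i)]; ring⟩
    exact (Finset.sum_subset hsub (fun i _ hni => by
      simp [hS, Finsupp.notMem_support_iff.mp hni])).symm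
  -- conclude on Icc by closedness
  have hQ : IsClosed {x : ℝ | |g x - ∑ j ∈ Finset.range n,
      (cs j * Real.sin ((2 * (j : ℝ) + 1) * Real.pi * x / (2 * L)) +
       cc j * Real.cos ((2 * (j : ℝ) + 1) * Real.pi * x / (2 * L)))| ≤ ε} := by
    apply isClosed_le _ continuous_const
    fun_prop
  have hIcoQ : Ico (-L) L ⊆ {x : ℝ | |g x - ∑ j ∈ Finset.range n,
      (cs j * Real.sin ((2 * (j : ℝ) + 1) * Real.pi * x / (2 * L)) +
       cc j * Real.cos ((2 * (j : ℝ) + 1) * Real.pi * x / (2 * L)))| ≤ ε} := by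
    intro x hx
    simp only [Set.mem_setOf_eq]
    rw [hsum]
    have hre : g x - ∑ i ∈ c.support, S i x
        = ((g x : ℂ) - ∑ i ∈ c.support,
            c i * Complex.exp (↑((2 * (i : ℝ) + 1) * θ x) * Complex.I)).re := by
      rw [Complex.sub_re, Complex.re_sum]
      simp [hS]
    rw [hre]
    calc |(_ : ℂ).re| ≤ ‖(_ : ℂ)‖ := Complex.abs_re_le_norm _
      _ ≤ ε := le_of_lt (by exact key x hx)
  intro x hx
  have : Icc (-L) L ⊆ {x : ℝ | |g x - ∑ j ∈ Finset.range n,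
      (cs j * Real.sin ((2 * (j : ℝ) + 1) * Real.pi * x / (2 * L)) +
       cc j * Real.cos ((2 * (j : ℝ) + 1) * Real.pi * x / (2 * L)))| ≤ ε} := by
    rw [← closure_Ico (show (-L : ℝ) ≠ L by linarith)]
    exact hQ.closure_subset_iff.mpr hIcoQ
  exact this hx

/-- The span of `1` together with `sin((2j−1)πx/(2L))` and `cos((2j−1)πx/(2L))`,
`j = 1, 2, 3, …`, is dense in `L²([−L, L])`: every square-integrable function can be
approximated in the `L²` norm by finite linear combinations of these functions. -/
theorem stmt_11 (L : ℝ) (hL : 0 < L) :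
    ∀ f : ℝ → ℝ, MemLp f 2 (volume.restrict (Icc (-L) L)) → ∀ ε > (0 : ℝ),
      ∃ (n : ℕ) (c₀ : ℝ) (cs cc : ℕ → ℝ),
        eLpNorm
          (fun x => f x - (c₀ + ∑ j ∈ Finset.range n,
            (cs j * Real.sin ((2 * (j : ℝ) + 1) * Real.pi * x / (2 * L)) +
             cc j * Real.cos ((2 * (j : ℝ) + 1) * Real.pi * x / (2 * L)))))
          2 (volume.restrict (Icc (-L) L)) < ENNReal.ofReal ε := by
  intro f hf ε hε
  set μ := volume.restrict (Icc (-L) L) with hμ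
  have hε4 : (0:ℝ) < ε / 4 := by linarith
  -- Step 1: continuous compactly supported approximation
  have hF : MemLp ((Icc (-L) L).indicator f) 2 volume :=
    (memLp_indicator_iff_restrict measurableSet_Icc).2 hf
  obtain ⟨g, hgsupp, hfg, hgcont, hgmem⟩ :=
    hF.exists_hasCompactSupport_eLpNorm_sub_le (by norm_num : (2:ℝ≥0∞) ≠ ⊤)
      (ε := ENNReal.ofReal (ε/4)) (by simp [hε4])
  have hfg' : eLpNorm (fun x => f x - g x) 2 μ ≤ ENNReal.ofReal (ε / 4) := by
    have h1 : (fun x => f x - g x) =ᵐ[μ]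
        (fun x => (Icc (-L) L).indicator f x - g x) := by
      filter_upwards [indicator_ae_eq_restrict (μ := volume) (f := f) measurableSet_Icc]
        with x hx
      rw [hx]
    calc eLpNorm (fun x => f x - g x) 2 μ
        = eLpNorm (fun x => (Icc (-L) L).indicator f x - g x) 2 μ := eLpNorm_congr_ae h1
      _ ≤ eLpNorm ((Icc (-L) L).indicator f - g) 2 volume :=
          eLpNorm_mono_measure _ Measure.restrict_le_self
      _ ≤ ENNReal.ofReal (ε / 4) := hfg
  -- bound on g
  obtain ⟨C0, hC0⟩ :=
    (isCompact_Icc (a := -L) (b := L)).exists_bound_of_continuousOn hgcont.continuousOn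
  set C := max C0 1 with hC
  have hC1 : (1:ℝ) ≤ C := le_max_right _ _
  have hCpos : (0:ℝ) < C := by linarith
  have hCb : ∀ x ∈ Icc (-L) L, |g x| ≤ C := fun x hx =>
    le_trans (le_of_eq (Real.norm_eq_abs _).symm) ((hC0 x hx).trans (le_max_left _ _))
  -- cutoff
  set δ := (ε / (4 * C))^2 / 2 with hδ
  have hδpos : 0 < δ := by positivity
  set χ : ℝ → ℝ := fun x => min 1 (max 0 ((L - |x|) / δ)) with hχ
  have hχcont : Continuous χ := by fun_prop
  have hχ0 : ∀ x, 0 ≤ χ x := fun x => le_min zero_le_one (le_max_left _ _)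
  have hχ1 : ∀ x, χ x ≤ 1 := fun x => min_le_left _ _
  have hχL : χ L = 0 := by
    simp [hχ, abs_of_nonneg hL.le]
  have hχmL : χ (-L) = 0 := by
    simp [hχ, abs_of_nonpos (by linarith : -L ≤ (0:ℝ))]
  have hχeq1 : ∀ x, |x| ≤ L - δ → χ x = 1 := by
    intro x hx
    have h1 : (1:ℝ) ≤ (L - |x|) / δ := by
      rw [le_div_iff₀ hδpos]; linarith
    rw [hχ]
    simp only []
    rw [max_eq_right (by linarith), min_eq_left h1]
  set g' : ℝ → ℝ := fun x => g x * χ x with hg'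
  have hg'cont : Continuous g' := hgcont.mul hχcont
  have hg'mL : g' (-L) = 0 := by simp [hg', hχmL]
  have hg'L : g' L = 0 := by simp [hg', hχL]
  -- bound ‖g - g'‖
  have hgg' : eLpNorm (fun x => g x - g' x) 2 μ ≤ ENNReal.ofReal (ε / 4) := by
    set E : Set ℝ := Icc (-L) L \ Ioo (-(L - δ)) (L - δ) with hE
    have hEm : MeasurableSet E := measurableSet_Icc.diff measurableSet_Ioo
    have hb : ∀ᵐ x ∂μ, ‖g x - g' x‖ ≤ ‖E.indicator (fun _ => C) x‖ := by
      rw [hμ]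
      filter_upwards [ae_restrict_mem measurableSet_Icc] with x hx
      by_cases hxE : x ∈ Ioo (-(L - δ)) (L - δ)
      · have hx1 : χ x = 1 := hχeq1 x (abs_le.mpr ⟨by linarith [hxE.1], by linarith [hxE.2]⟩)
        simp [hg', hx1]
      · have hxE' : x ∈ E := ⟨hx, hxE⟩
        rw [Set.indicator_of_mem hxE']
        have e1 : g x - g' x = g x * (1 - χ x) := by rw [hg']; ring
        rw [e1, Real.norm_eq_abs, Real.norm_eq_abs, abs_mul]
        have h2 : |1 - χ x| ≤ 1 := by
          rw [abs_le]; constructor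
          · linarith [hχ1 x]
          · linarith [hχ0 x]
        have h3 : |g x| ≤ C := hCb x hx
        calc |g x| * |1 - χ x| ≤ C * 1 :=
              mul_le_mul h3 h2 (abs_nonneg _) hCpos.le
          _ = C := mul_one C
          _ ≤ |C| := le_abs_self C
    calc eLpNorm (fun x => g x - g' x) 2 μ
        ≤ eLpNorm (E.indicator (fun _ => C)) 2 μ := eLpNorm_mono_ae hb
      _ = ‖C‖₊ * μ E ^ (1 / (2:ℝ≥0∞).toReal) := eLpNorm_indicator_const hEm (by norm_num) (by norm_num)
      _ ≤ ENNReal.ofReal (ε / 4) := by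
          have hμE : μ E ≤ ENNReal.ofReal (2 * δ) := by
            have hsub : E ⊆ Icc (-L) (-(L - δ)) ∪ Icc (L - δ) L := by
              intro x hx
              obtain ⟨⟨ha, hb'⟩, hni⟩ := hx
              rw [Set.mem_Ioo] at hni
              push_neg at hni
              rcases le_or_gt x (-(L-δ)) with h | h
              · exact Or.inl ⟨ha, h⟩
              · exact Or.inr ⟨hni h, hb'⟩
            calc μ E ≤ volume E := by
                  rw [hμ]; exact Measure.restrict_le_self _
              _ ≤ volume (Icc (-L) (-(L - δ)) ∪ Icc (L - δ) L) := measure_mono hsub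
              _ ≤ volume (Icc (-L) (-(L - δ))) + volume (Icc (L - δ) L) := measure_union_le _ _
              _ = ENNReal.ofReal δ + ENNReal.ofReal δ := by
                  rw [Real.volume_Icc, Real.volume_Icc]
                  norm_num
              _ = ENNReal.ofReal (2 * δ) := by
                  rw [← ENNReal.ofReal_add hδpos.le hδpos.le]; ring_nf
          have h2d : 2 * δ = (ε / (4 * C))^2 := by rw [hδ]; ring
          have hq : (0:ℝ) ≤ ε / (4 * C) := by positivity
          calc ‖C‖₊ * μ E ^ (1 / (2:ℝ≥0∞).toReal)
              ≤ ‖C‖₊ * ENNReal.ofReal (2 * δ) ^ (1 / (2:ℝ≥0∞).toReal) :=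
                mul_le_mul_right (ENNReal.rpow_le_rpow hμE (by positivity)) _
            _ = ENNReal.ofReal C * ENNReal.ofReal (ε / (4 * C)) := by
                rw [h2d]
                congr 1
                · exact Real.enorm_eq_ofReal hCpos.le
                · rw [ENNReal.ofReal_pow hq,
                    ← ENNReal.rpow_natCast (ENNReal.ofReal (ε / (4 * C))) 2,
                    ← ENNReal.rpow_mul]
                  norm_num
            _ = ENNReal.ofReal (ε / 4) := by
                rw [← ENNReal.ofReal_mul hCpos.le]
                congr 1
                have hCne : C ≠ 0 := hCpos.ne'
                field_simp
  -- trig approximation of g'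
  set ε₂ := (ε / 4) / Real.sqrt (2 * L) with hε₂
  have hsqrtpos : 0 < Real.sqrt (2 * L) := Real.sqrt_pos.mpr (by linarith)
  have hε₂pos : 0 < ε₂ := by positivity
  obtain ⟨n, cs, cc, hA⟩ := trig_unif L hL g' hg'cont hg'mL hg'L hε₂pos
  set A : ℝ → ℝ := fun x => ∑ j ∈ Finset.range n,
      (cs j * Real.sin ((2 * (j : ℝ) + 1) * Real.pi * x / (2 * L)) +
       cc j * Real.cos ((2 * (j : ℝ) + 1) * Real.pi * x / (2 * L))) with hAdef
  have hAcont : Continuous A := by rw [hAdef]; fun_prop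
  have hg'A : eLpNorm (fun x => g' x - A x) 2 μ ≤ ENNReal.ofReal (ε / 4) := by
    have hb : ∀ᵐ x ∂μ, ‖g' x - A x‖ ≤ ε₂ := by
      rw [hμ]
      filter_upwards [ae_restrict_mem measurableSet_Icc] with x hx
      rw [Real.norm_eq_abs]
      exact hA x hx
    calc eLpNorm (fun x => g' x - A x) 2 μ
        ≤ μ Set.univ ^ (2:ℝ≥0∞).toReal⁻¹ * ENNReal.ofReal ε₂ := eLpNorm_le_of_ae_bound hb
      _ = ENNReal.ofReal (ε / 4) := by
          have huniv : μ Set.univ = ENNReal.ofReal (2 * L) := by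
            rw [hμ, Measure.restrict_apply_univ, Real.volume_Icc]
            congr 1
            ring
          rw [huniv]
          have hrt : ENNReal.ofReal (2 * L) ^ ((2:ℝ≥0∞).toReal)⁻¹
              = ENNReal.ofReal (Real.sqrt (2 * L)) := by
            rw [show ((2:ℝ≥0∞).toReal)⁻¹ = ((2:ℝ)⁻¹) by norm_num,
              ENNReal.ofReal_rpow_of_pos (by linarith : (0:ℝ) < 2 * L)]
            congr 1
            rw [Real.sqrt_eq_rpow]
            norm_num
          rw [hrt, ← ENNReal.ofReal_mul hsqrtpos.le, hε₂]
          congr 1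
          rw [mul_comm, div_mul_cancel₀ _ hsqrtpos.ne']
  -- combine
  refine ⟨n, 0, cs, cc, ?_⟩
  have hfun : (fun x => f x - (0 + A x))
      = (fun x => (f x - g x) + ((g x - g' x) + (g' x - A x))) := by
    funext x; ring
  have hm1 : AEStronglyMeasurable (fun x => f x - g x) μ :=
    hf.aestronglyMeasurable.sub hgcont.aestronglyMeasurable
  have hm2 : AEStronglyMeasurable (fun x => g x - g' x) μ :=
    (hgcont.sub hg'cont).aestronglyMeasurable
  have hm3 : AEStronglyMeasurable (fun x => g' x - A x) μ :=
    (hg'cont.sub hAcont).aestronglyMeasurable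
  calc eLpNorm (fun x => f x - (0 + A x)) 2 μ
      = eLpNorm (fun x => (f x - g x) + ((g x - g' x) + (g' x - A x))) 2 μ := by rw [hfun]
    _ ≤ eLpNorm (fun x => f x - g x) 2 μ
        + eLpNorm (fun x => (g x - g' x) + (g' x - A x)) 2 μ :=
        eLpNorm_add_le hm1 (hm2.add hm3) one_le_two
    _ ≤ eLpNorm (fun x => f x - g x) 2 μ
        + (eLpNorm (fun x => g x - g' x) 2 μ + eLpNorm (fun x => g' x - A x) 2 μ) := by
        gcongr
        exact eLpNorm_add_le hm2 hm3 one_le_two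
    _ ≤ ENNReal.ofReal (ε / 4) + (ENNReal.ofReal (ε / 4) + ENNReal.ofReal (ε / 4)) := by
        gcongr
    _ = ENNReal.ofReal (ε / 4 + (ε / 4 + ε / 4)) := by
        rw [← ENNReal.ofReal_add hε4.le hε4.le,
          ← ENNReal.ofReal_add hε4.le (by linarith : (0:ℝ) ≤ ε / 4 + ε / 4)]
    _ < ENNReal.ofReal ε := by
        rw [ENNReal.ofReal_lt_ofReal_iff hε]
        linarith
end

section
/- For every continuously differentiable u : ℝ → ℝ with compact support and every x ∈ ℝ, the function Ku is differentiable at x and its derivative satisfies (Ku)′(x) = (Ju)(x) − Γ u′(x). -/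
open MeasureTheory Set Convolution

/-- For `u` continuously differentiable with compact support, `Ku` is differentiable and
`(Ku)′(x) = (Ju)(x) − Γ u′(x)`. -/
theorem stmt_13 (γ : ℝ → ℝ) (hγ : ContDiff ℝ 1 γ)
    (hγi : Integrable γ) (hγ'i : Integrable (deriv γ)) :
    ∀ u : ℝ → ℝ, ContDiff ℝ 1 u → HasCompactSupport u → ∀ x : ℝ,
      HasDerivAt (fun x' => ∫ y : ℝ, (u y - u x') * γ (x' - y))
        ((∫ y : ℝ, (u y - u x) * deriv γ (x - y)) - (∫ z : ℝ, γ z) * deriv u x) x := by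
  intro u hu hcu x
  -- boundedness of u
  obtain ⟨x₀, hx₀⟩ := (hu.continuous.norm).exists_forall_ge_of_hasCompactSupport hcu.norm
  have hum : AEStronglyMeasurable u volume := hu.continuous.aestronglyMeasurable
  -- boundedness of u'
  have hu' : Continuous (deriv u) := (contDiff_one_iff_deriv.mp hu).2
  have hcu' : HasCompactSupport (deriv u) := hcu.deriv
  obtain ⟨x₁, hx₁⟩ := (hu'.norm).exists_forall_ge_of_hasCompactSupport hcu'.norm
  -- ∫ deriv γ = 0
  have hγ0 : (∫ z : ℝ, deriv γ z) = 0 :=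
    integral_eq_zero_of_hasDerivAt_of_integrable
      (fun z => (hγ.differentiable one_ne_zero z).hasDerivAt) hγ'i hγi
  -- the function rewritten as convolution minus a multiple of u
  have key : (fun x' => ∫ y : ℝ, (u y - u x') * γ (x' - y))
      = fun x' => (γ ⋆[ContinuousLinearMap.mul ℝ ℝ] u) x' - u x' * (∫ z : ℝ, γ z) := by
    funext x'
    have hγx : Integrable (fun y : ℝ => γ (x' - y)) := hγi.comp_sub_left x'
    have h1 : Integrable (fun y : ℝ => u y * γ (x' - y)) :=
      hγx.bdd_mul (c := ‖u x₀‖) hum (Filter.Eventually.of_forall fun y => hx₀ y)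
    have h2 : Integrable (fun y : ℝ => u x' * γ (x' - y)) := hγx.const_mul _
    have : (fun y : ℝ => (u y - u x') * γ (x' - y))
        = fun y => u y * γ (x' - y) - u x' * γ (x' - y) := by
      funext y; ring
    rw [this, integral_sub h1 h2, integral_const_mul,
      integral_sub_left_eq_self (fun z => γ z) (volume : Measure ℝ) x']
    congr 1
    rw [convolution_def]
    calc (∫ y : ℝ, u y * γ (x' - y))
        = ∫ y : ℝ, u (x' - y) * γ (x' - (x' - y)) :=
          (integral_sub_left_eq_self (fun y => u y * γ (x' - y)) (volume : Measure ℝ) x').symm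
      _ = ∫ t : ℝ, (ContinuousLinearMap.mul ℝ ℝ) (γ t) (u (x' - t)) := by
          congr 1; funext y; simp [sub_sub_cancel, mul_comm]
  rw [key]
  -- derivative of the convolution
  have hder : HasDerivAt (γ ⋆[ContinuousLinearMap.mul ℝ ℝ] u)
      ((γ ⋆[ContinuousLinearMap.mul ℝ ℝ] deriv u) x) x :=
    hcu.hasDerivAt_convolution_right (ContinuousLinearMap.mul ℝ ℝ)
      hγi.locallyIntegrable hu x
  have hder2 : HasDerivAt (fun x' => u x' * (∫ z : ℝ, γ z))
      (deriv u x * (∫ z : ℝ, γ z)) x :=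
    ((hu.differentiable one_ne_zero x).hasDerivAt).mul_const _
  have := hder.sub hder2
  refine this.congr_deriv ?_
  -- value identity
  have hγx : Integrable (fun y : ℝ => γ (x - y)) := hγi.comp_sub_left x
  have hγ'x : Integrable (fun y : ℝ => deriv γ (x - y)) := hγ'i.comp_sub_left x
  have hγ'c : Continuous (deriv γ) := (contDiff_one_iff_deriv.mp hγ).2
  have hA : Integrable (fun y : ℝ => deriv u y * γ (x - y)) :=
    hγx.bdd_mul (c := ‖deriv u x₁‖) hu'.aestronglyMeasurable (Filter.Eventually.of_forall fun y => hx₁ y)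
  have hB : Integrable (fun y : ℝ => u y * deriv γ (x - y)) :=
    hγ'x.bdd_mul (c := ‖u x₀‖) hum (Filter.Eventually.of_forall fun y => hx₀ y)
  -- integration by parts: ∫ u' (y) γ(x-y) = ∫ u y γ'(x-y)
  have parts : (∫ y : ℝ, deriv u y * γ (x - y)) = ∫ y : ℝ, u y * deriv γ (x - y) := by
    have hv : ∀ y : ℝ, HasDerivAt (fun y => u y * γ (x - y))
        (deriv u y * γ (x - y) - u y * deriv γ (x - y)) y := by
      intro y
      have h1 : HasDerivAt u (deriv u y) y := (hu.differentiable one_ne_zero y).hasDerivAt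
      have h2 : HasDerivAt (fun y : ℝ => γ (x - y)) (deriv γ (x - y) * (-1)) y :=
        ((hγ.differentiable one_ne_zero (x - y)).hasDerivAt).comp y
          (((hasDerivAt_id y).const_sub x))
      have := h1.mul h2
      exact this.congr_deriv (by ring)
    have hvint : Integrable (fun y : ℝ => u y * γ (x - y)) :=
      hγx.bdd_mul (c := ‖u x₀‖) hum (Filter.Eventually.of_forall fun y => hx₀ y)
    have h0 : (∫ y : ℝ, (deriv u y * γ (x - y) - u y * deriv γ (x - y))) = 0 :=
      integral_eq_zero_of_hasDerivAt_of_integrable hv (hA.sub hB) hvint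
    rw [integral_sub hA hB] at h0
    linarith
  have hsplit : (∫ y : ℝ, (u y - u x) * deriv γ (x - y))
      = ∫ y : ℝ, u y * deriv γ (x - y) := by
    have : (fun y : ℝ => (u y - u x) * deriv γ (x - y))
        = fun y => u y * deriv γ (x - y) - u x * deriv γ (x - y) := by
      funext y; ring
    rw [this, integral_sub hB (hγ'x.const_mul _), integral_const_mul,
      integral_sub_left_eq_self (fun z => deriv γ z) (volume : Measure ℝ) x, hγ0]
    ring
  have hconv : (γ ⋆[ContinuousLinearMap.mul ℝ ℝ] deriv u) x
      = ∫ y : ℝ, deriv u y * γ (x - y) := by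
    rw [convolution_def]
    calc (∫ t : ℝ, (ContinuousLinearMap.mul ℝ ℝ) (γ t) (deriv u (x - t)))
        = ∫ t : ℝ, deriv u (x - t) * γ t := by
          congr 1; funext t; simp [mul_comm]
      _ = ∫ y : ℝ, deriv u (x - (x - y)) * γ (x - y) :=
          (integral_sub_left_eq_self (fun t => deriv u (x - t) * γ t)
            (volume : Measure ℝ) x).symm
      _ = ∫ y : ℝ, deriv u y * γ (x - y) := by
          congr 1; funext y; simp [sub_sub_cancel]
  rw [hsplit, hconv, parts]
  ring
end

section
/- Assume f is differentiable on [0, T] and that for every t ∈ [0, T] the identity (1/2) f′(t) + d · B[u(t,·), u(t,·)] + μ f(t) = ∫_Ω σ(u(t,x))² σ(w(t,x)) (1 − b σ(u(t,x))) u(t,x) dx holds. Then f(t) ≤ e^{2(M² + bM³) t} f(0) for all t ∈ [0, T]. -/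
open MeasureTheory Set

/-- Energy estimate for the plant variable: if `f(t) = ‖u(t)‖²_{L²}` satisfies the Galerkin
energy identity, then `f(t) ≤ e^{2(M² + bM³)t} f(0)` on `[0, T]`. -/
theorem stmt_16 (L T d μ b M : ℝ) (hL : 0 < L) (hT : 0 < T)
    (hd : 0 ≤ d) (hμ : 0 ≤ μ) (hb : 0 ≤ b) (hM : 0 ≤ M)
    (γ : ℝ → ℝ) (hγm : Measurable γ) (hγ0 : ∀ z, 0 ≤ γ z) (hγe : ∀ z, γ (-z) = γ z)
    (hγi : Integrable γ)
    (σ : ℝ → ℝ) (hσm : Measurable σ) (hσM : ∀ s, |σ s| ≤ M) (hσs : ∀ s, |σ s| ≤ |s|)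
    (u w : ℝ → ℝ → ℝ)
    (hu : ∀ t ∈ Icc (0 : ℝ) T, MemLp (u t) 2 volume ∧
      (∀ᵐ x : ℝ, x ∉ Icc (-L) L → u t x = 0))
    (hw : ∀ t ∈ Icc (0 : ℝ) T, Measurable (w t))
    (f f' : ℝ → ℝ) (hf : ∀ t, f t = ∫ x : ℝ, (u t x) ^ 2)
    (hder : ∀ t ∈ Icc (0 : ℝ) T, HasDerivWithinAt f (f' t) (Icc (0 : ℝ) T) t)
    (hid : ∀ t ∈ Icc (0 : ℝ) T,
      (1/2 : ℝ) * f' t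
        + d * ((1/2 : ℝ) * ∫ x : ℝ, ∫ y : ℝ, (u t y - u t x) * γ (x - y) * (u t y - u t x))
        + μ * f t
      = ∫ x in Icc (-L) L, σ (u t x) ^ 2 * σ (w t x) * (1 - b * σ (u t x)) * u t x) :
    ∀ t ∈ Icc (0 : ℝ) T, f t ≤ Real.exp (2 * (M ^ 2 + b * M ^ 3) * t) * f 0 := by
  set K : ℝ := M ^ 2 + b * M ^ 3 with hKdef
  have hK : 0 ≤ K := by positivity
  have hfnn : ∀ t, 0 ≤ f t := by
    intro t
    rw [hf]
    exact integral_nonneg fun x => sq_nonneg _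
  -- differential inequality
  have hbound : ∀ t ∈ Icc (0 : ℝ) T, f' t ≤ 2 * K * f t := by
    intro t ht
    obtain ⟨hmem, -⟩ := hu t ht
    have husq : Integrable (fun x => (u t x) ^ 2) volume := hmem.integrable_sq
    -- the nonlocal form is nonnegative
    have hB : 0 ≤ ∫ x : ℝ, ∫ y : ℝ, (u t y - u t x) * γ (x - y) * (u t y - u t x) := by
      refine integral_nonneg fun x => integral_nonneg fun y => ?_
      show (0:ℝ) ≤ (u t y - u t x) * γ (x - y) * (u t y - u t x)
      nlinarith [hγ0 (x - y), sq_nonneg (u t y - u t x)]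
    set g : ℝ → ℝ := fun x => σ (u t x) ^ 2 * σ (w t x) * (1 - b * σ (u t x)) * u t x with hgdef
    -- pointwise bound on the reaction term
    have hpt : ∀ x, |g x| ≤ K * (u t x) ^ 2 := by
      intro x
      set s := σ (u t x)
      set a := u t x
      set sw := σ (w t x)
      have h1bs : |1 - b * s| ≤ 1 + b * M := by
        calc |1 - b * s| ≤ |(1 : ℝ)| + |b * s| := abs_sub 1 (b * s)
          _ = 1 + b * |s| := by rw [abs_one, abs_mul, abs_of_nonneg hb]
          _ ≤ 1 + b * M := by nlinarith [hσM (u t x), abs_nonneg s]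
      have heq : |g x| = (|s| * |s|) * |sw| * |1 - b * s| * |a| := by
        simp only [hgdef, abs_mul, sq_abs, sq]
        rfl
      rw [heq]
      have hsm := hσM (u t x)
      have hsa := hσs (u t x)
      have hswm := hσM (w t x)
      calc (|s| * |s|) * |sw| * |1 - b * s| * |a|
          ≤ (M * |a|) * M * (1 + b * M) * |a| := by
            gcongr <;> first
              | exact abs_nonneg _
              | positivity
              | assumption
        _ = K * a ^ 2 := by
            have h := abs_mul_abs_self a
            nlinarith [h]
    have hum : AEMeasurable (u t) volume := hmem.aestronglyMeasurable.aemeasurable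
    have hgm : AEStronglyMeasurable g volume := by
      have h1 : AEMeasurable (fun x => σ (u t x)) volume := hσm.comp_aemeasurable hum
      have h2 : AEMeasurable (fun x => σ (w t x)) volume :=
        (hσm.comp (hw t ht)).aemeasurable
      exact ((((h1.pow_const 2).mul h2).mul
        (aemeasurable_const.sub (aemeasurable_const.mul h1))).mul hum).aestronglyMeasurable
    have hKu : Integrable (fun x => K * (u t x) ^ 2) (volume.restrict (Icc (-L) L)) :=
      (husq.const_mul K).restrict
    have hgint : Integrable g (volume.restrict (Icc (-L) L)) := by
      refine Integrable.mono hKu hgm.restrict (ae_of_all _ fun x => ?_)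
      rw [Real.norm_eq_abs, Real.norm_eq_abs]
      exact le_trans (hpt x) (le_abs_self _)
    have hRHS : (∫ x in Icc (-L) L, g x) ≤ K * f t := by
      calc (∫ x in Icc (-L) L, g x)
          ≤ ∫ x in Icc (-L) L, K * (u t x) ^ 2 :=
            integral_mono hgint hKu fun x => le_trans (le_abs_self _) (hpt x)
        _ = K * ∫ x in Icc (-L) L, (u t x) ^ 2 := integral_const_mul K _
        _ ≤ K * ∫ x : ℝ, (u t x) ^ 2 := by
            refine mul_le_mul_of_nonneg_left ?_ hK
            exact setIntegral_le_integral husq (ae_of_all _ fun x => sq_nonneg _)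
        _ = K * f t := by rw [hf]
    have hident := hid t ht
    have hBterm : 0 ≤ d * ((1/2 : ℝ) *
        ∫ x : ℝ, ∫ y : ℝ, (u t y - u t x) * γ (x - y) * (u t y - u t x)) := by positivity
    have hμf : 0 ≤ μ * f t := mul_nonneg hμ (hfnn t)
    rw [hgdef] at hRHS
    simp only at hRHS
    linarith
  -- Gronwall via monotonicity of f t * exp (-(2K) t)
  set c : ℝ := 2 * K with hcdef
  have hcont : ContinuousOn f (Icc 0 T) := fun t ht => (hder t ht).continuousWithinAt
  set G : ℝ → ℝ := fun t => f t * Real.exp (-c * t) with hGdef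
  have hanti : AntitoneOn G (Icc 0 T) := by
    apply antitoneOn_of_deriv_nonpos (convex_Icc 0 T)
    · exact hcont.mul ((Real.continuous_exp.comp
        (continuous_const.mul continuous_id)).continuousOn)
    · rw [interior_Icc]
      intro x hx
      have hx' : x ∈ Icc (0 : ℝ) T := Ioo_subset_Icc_self hx
      have hfd : HasDerivAt f (f' x) x :=
        (hder x hx').hasDerivAt (Icc_mem_nhds hx.1 hx.2)
      have h1 : HasDerivAt (fun t : ℝ => -c * t) (-c) x := by
        simpa using (hasDerivAt_id x).const_mul (-c)
      exact (hfd.mul h1.exp).differentiableAt.differentiableWithinAt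
    · rw [interior_Icc]
      intro x hx
      have hx' : x ∈ Icc (0 : ℝ) T := Ioo_subset_Icc_self hx
      have hfd : HasDerivAt f (f' x) x :=
        (hder x hx').hasDerivAt (Icc_mem_nhds hx.1 hx.2)
      have h1 : HasDerivAt (fun t : ℝ => -c * t) (-c) x := by
        simpa using (hasDerivAt_id x).const_mul (-c)
      have hG : HasDerivAt G (f' x * Real.exp (-c * x)
          + f x * (Real.exp (-c * x) * -c)) x := hfd.mul h1.exp
      rw [hG.deriv]
      have hfb := hbound x hx'
      have hfn := hfnn x
      nlinarith [Real.exp_pos (-c * x)]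
  intro t ht
  have h0 : (0 : ℝ) ∈ Icc (0 : ℝ) T := left_mem_Icc.mpr hT.le
  have hGle : G t ≤ G 0 := hanti h0 ht ht.1
  have hG0 : G 0 = f 0 := by simp [hGdef]
  rw [hG0] at hGle
  have hh : Real.exp (-c * t) * Real.exp (c * t) = 1 := by
    rw [← Real.exp_add]
    norm_num
  have h2 : f t * Real.exp (-c * t) ≤ f 0 := hGle
  have hexpn : 0 < Real.exp (c * t) := Real.exp_pos _
  have h3 := mul_le_mul_of_nonneg_right h2 hexpn.le
  have hct : 2 * (M ^ 2 + b * M ^ 3) * t = c * t := by rw [hcdef]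
  rw [hct]
  rw [mul_assoc, hh, mul_one] at h3
  linarith [h3, mul_comm (f 0) (Real.exp (c * t)) ▸ h3]
end

section
/- Assume g is differentiable on [0, T] and that for every t ∈ [0, T] the identity (1/2) g′(t) + ∫_{−L}^{L} (∂ₓw(t,x))² dx − ν ∫_{−L}^{L} ∂ₓw(t,x) w(t,x) dx + g(t) = ∫_{−L}^{L} (a − σ(u(t,x))² σ(w(t,x))) w(t,x) dx holds. Then g(t) ≤ g(0) + 2 L a² t for all t ∈ [0, T]. -/
open MeasureTheory Set

/-- Energy estimate for the water variable: if `g(t) = ‖w(t)‖²_{L²}` satisfies the Galerkin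
energy identity, then `g(t) ≤ g(0) + 2La²t` on `[0, T]`. -/
theorem stmt_17 (L T a ν M : ℝ) (hL : 0 < L) (hT : 0 < T) (hM : 0 ≤ M)
    (σ : ℝ → ℝ) (hσm : Measurable σ) (hσM : ∀ s, |σ s| ≤ M) (hσsign : ∀ s, 0 ≤ σ s * s)
    (w w' u : ℝ → ℝ → ℝ)
    (hw : ∀ t ∈ Icc (0 : ℝ) T,
      (∀ x ∈ Icc (-L) L, HasDerivAt (w t) (w' t x) x) ∧
      ContinuousOn (w' t) (Icc (-L) L) ∧ w t (-L) = 0 ∧ w t L = 0)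
    (hu : ∀ t ∈ Icc (0 : ℝ) T, Measurable (u t))
    (g g' : ℝ → ℝ) (hg : ∀ t, g t = ∫ x in (-L)..L, (w t x) ^ 2)
    (hder : ∀ t ∈ Icc (0 : ℝ) T, HasDerivWithinAt g (g' t) (Icc (0 : ℝ) T) t)
    (hid : ∀ t ∈ Icc (0 : ℝ) T,
      (1/2 : ℝ) * g' t + (∫ x in (-L)..L, (w' t x) ^ 2)
        - ν * (∫ x in (-L)..L, w' t x * w t x) + g t
      = ∫ x in (-L)..L, (a - σ (u t x) ^ 2 * σ (w t x)) * w t x) :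
    ∀ t ∈ Icc (0 : ℝ) T, g t ≤ g 0 + 2 * L * a ^ 2 * t := by
  have hLle : (-L) ≤ L := by linarith
  have huIcc : uIcc (-L) L = Icc (-L) L := uIcc_of_le hLle
  -- Step 1: the derivative bound g' t ≤ 2 L a² on [0,T]
  have key : ∀ t ∈ Icc (0 : ℝ) T, g' t ≤ 2 * L * a ^ 2 := by
    intro t ht
    obtain ⟨hwd, hw'c, hbl, hbr⟩ := hw t ht
    have hwc : ContinuousOn (w t) (Icc (-L) L) := fun x hx =>
      (hwd x hx).continuousAt.continuousWithinAt
    -- ∫ w' w = 0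
    have I1 : (∫ x in (-L)..L, w' t x * w t x) = 0 := by
      have h1 : ∀ x ∈ uIcc (-L) L, HasDerivAt (fun y => w t y ^ 2 / 2) (w' t x * w t x) x := by
        intro x hx
        rw [huIcc] at hx
        have := ((hwd x hx).pow 2).div_const 2
        convert this using 1
        · rfl
        · rfl
        · rfl
        · norm_num
          ring
      have h2 : IntervalIntegrable (fun x => w' t x * w t x) volume (-L) L := by
        apply ContinuousOn.intervalIntegrable
        rw [huIcc]
        exact hw'c.mul hwc
      rw [intervalIntegral.integral_eq_sub_of_hasDerivAt h1 h2, hbl, hbr]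
      ring
    -- ∫ w'² ≥ 0
    have I2 : 0 ≤ ∫ x in (-L)..L, (w' t x) ^ 2 :=
      intervalIntegral.integral_nonneg hLle (fun x _ => sq_nonneg _)
    -- g t ≥ 0
    have I3 : 0 ≤ g t := by
      rw [hg t]
      exact intervalIntegral.integral_nonneg hLle (fun x _ => sq_nonneg _)
    -- bound the right-hand side integral
    obtain ⟨C, hC⟩ := isCompact_Icc.exists_bound_of_continuousOn hwc
    have hwm : AEMeasurable (w t) (volume.restrict (Ioc (-L) L)) :=
      (hwc.mono Ioc_subset_Icc_self).aemeasurable measurableSet_Ioc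
    have hfm : AEMeasurable (fun x => (a - σ (u t x) ^ 2 * σ (w t x)) * w t x)
        (volume.restrict (Ioc (-L) L)) := by
      exact ((aemeasurable_const.sub
        ((((hσm.comp (hu t ht)).pow_const 2).aemeasurable).mul
          (hσm.comp_aemeasurable hwm))).mul hwm)
    have hintf : IntervalIntegrable (fun x => (a - σ (u t x) ^ 2 * σ (w t x)) * w t x)
        volume (-L) L := by
      rw [intervalIntegrable_iff_integrableOn_Ioc_of_le hLle]
      apply Integrable.mono' (integrable_const ((|a| + M ^ 2 * M) * |C|)) hfm.aestronglyMeasurable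
      filter_upwards [ae_restrict_mem measurableSet_Ioc] with x hx
      have hx' : x ∈ Icc (-L) L := Ioc_subset_Icc_self hx
      have hb1 : |σ (u t x)| ≤ M := hσM _
      have hb2 : |σ (w t x)| ≤ M := hσM _
      have hb3 : ‖w t x‖ ≤ C := hC x hx'
      have hb3' : |w t x| ≤ |C| := le_trans hb3 (le_abs_self C)
      calc ‖(a - σ (u t x) ^ 2 * σ (w t x)) * w t x‖
          = |a - σ (u t x) ^ 2 * σ (w t x)| * |w t x| := abs_mul _ _
        _ ≤ (|a| + M ^ 2 * M) * |C| := by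
            apply mul_le_mul _ hb3' (abs_nonneg _)
              (by positivity)
            calc |a - σ (u t x) ^ 2 * σ (w t x)| ≤ |a| + |σ (u t x) ^ 2 * σ (w t x)| :=
                  abs_sub _ _
              _ ≤ |a| + M ^ 2 * M := by
                  gcongr _ + ?_
                  rw [abs_mul, abs_pow]
                  exact mul_le_mul (pow_le_pow_left₀ (abs_nonneg _) hb1 2) hb2 (abs_nonneg _)
                    (by positivity)
    have hintb : IntervalIntegrable (fun x => a ^ 2 / 2 + (w t x) ^ 2 / 2) volume (-L) L := by
      apply ContinuousOn.intervalIntegrable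
      rw [huIcc]
      exact continuousOn_const.add (((hwc.pow 2).div_const 2))
    have hpt : ∀ x ∈ Icc (-L) L, (a - σ (u t x) ^ 2 * σ (w t x)) * w t x
        ≤ a ^ 2 / 2 + (w t x) ^ 2 / 2 := by
      intro x _
      have h1 : 0 ≤ σ (w t x) * w t x := hσsign _
      have h2 : 0 ≤ σ (u t x) ^ 2 := sq_nonneg _
      nlinarith [sq_nonneg (a - w t x), mul_nonneg h2 h1]
    have I4 : (∫ x in (-L)..L, (a - σ (u t x) ^ 2 * σ (w t x)) * w t x)
        ≤ ∫ x in (-L)..L, (a ^ 2 / 2 + (w t x) ^ 2 / 2) :=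
      intervalIntegral.integral_mono_on hLle hintf hintb hpt
    have hintw2 : IntervalIntegrable (fun x => (w t x) ^ 2) volume (-L) L := by
      apply ContinuousOn.intervalIntegrable
      rw [huIcc]
      exact hwc.pow 2
    have I5 : (∫ x in (-L)..L, (a ^ 2 / 2 + (w t x) ^ 2 / 2))
        = L * a ^ 2 + g t / 2 := by
      rw [hg t]
      have : (∫ x in (-L)..L, (a ^ 2 / 2 + (w t x) ^ 2 / 2))
          = (∫ x in (-L)..L, (a ^ 2 / 2 : ℝ)) + ∫ x in (-L)..L, (w t x) ^ 2 / 2 :=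
        intervalIntegral.integral_add (intervalIntegrable_const) (hintw2.div_const 2)
      rw [this, intervalIntegral.integral_const, intervalIntegral.integral_div]
      simp only [smul_eq_mul]
      ring
    have hident := hid t ht
    rw [I1] at hident
    rw [I5] at I4
    linarith
  -- Step 2: integrate the bound
  intro t ht
  set h : ℝ → ℝ := fun s => g 0 + 2 * L * a ^ 2 * s - g s with hh
  have hmono : MonotoneOn h (Icc (0 : ℝ) T) := by
    apply monotoneOn_of_hasDerivWithinAt_nonneg (convex_Icc 0 T)
      (f' := fun s => 2 * L * a ^ 2 - g' s)
    · intro s hs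
      exact (continuousWithinAt_const.add
        (continuousWithinAt_const.mul continuousWithinAt_id)).sub
        (hder s hs).continuousWithinAt
    · intro s hs
      have hs' : s ∈ Icc (0 : ℝ) T := interior_subset hs
      have : HasDerivWithinAt (fun s => g 0 + 2 * L * a ^ 2 * s) (2 * L * a ^ 2)
          (interior (Icc (0 : ℝ) T)) s := by
        simpa using ((hasDerivWithinAt_id s _).const_mul (2 * L * a ^ 2)).const_add (g 0)
      exact this.sub (((hder s hs').mono interior_subset))
    · intro s hs
      have hs' : s ∈ Icc (0 : ℝ) T := interior_subset hs
      linarith [key s hs']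
  have h0 : (0 : ℝ) ∈ Icc (0 : ℝ) T := ⟨le_refl _, le_of_lt hT⟩
  have := hmono h0 ht ht.1
  simp only [hh] at this
  linarith [this]
end
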